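/- arXiv:1809.07467 — 2 statements merged into one kernel-verified Lean document; each statement's English description precedes it below -/
import Mathlib

section
/- For w a power of 2 and a partition λ of n with 2-quotient (𝛌₀, 𝛌₁), if the degree multiplicity formula ψ_𝛌(1) = C(w, |𝛌₀|) · χ_{𝛌₀}(1) · χ_{𝛌₁}(1) is odd and |𝛌₀| > |𝛌₁|, then 𝛌₁ = () and 𝛌₀ is a hook partition, i.e., 𝛌₀ = (r, 1^{w−r}) for some 1 ≤ r ≤ w. -/
open Finset

/-- The hook length of the cell `(i, j)` of a Young diagram `μ`. -/
def hookLength (μ : YoungDiagram) (i j : ℕ) : ℕ :=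
  (μ.rowLen i - j) + (μ.colLen j - i) - 1

/-- The degree `χ_μ(1)` of the irreducible character of `S_{|μ|}` labeled by `μ`,
given by the hook length formula. -/
def charDegree (μ : YoungDiagram) : ℕ :=
  Nat.factorial μ.card / ∏ c ∈ μ.cells, hookLength μ c.1 c.2

namespace S15

/-- 2-adic valuation -/
def v2 (n : ℕ) : ℕ := padicValNat 2 n

/-- product of factorials of elements -/
def FF (s : Finset ℕ) : ℕ := ∏ x ∈ s, (Nat.factorial x)

/-- the set of ordered pairs (big, small) -/
def pairs (s : Finset ℕ) : Finset (ℕ × ℕ) := s.offDiag.filter (fun p => p.2 < p.1)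

/-- product of differences over pairs -/
def PP (s : Finset ℕ) : ℕ := ∏ p ∈ pairs s, (p.1 - p.2)

/-- the "partition size" of a beta-set -/
def nn (s : Finset ℕ) : ℕ := (∑ x ∈ s, x) - (s.card.choose 2)

/-- s is the beta-set of a hook (possibly padded with zero rows) -/
def IsHookSet (s : Finset ℕ) : Prop :=
  ∃ M g, g < s.card ∧ s.card ≤ M ∧ s = insert M ((range s.card).erase g)

lemma two_mul_choose_two (k : ℕ) : 2 * k.choose 2 = k * (k - 1) := by
  rw [Nat.choose_two_right]
  cases k with
  | zero => simp
  | succ n =>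
    have he : Even ((n + 1) * n) := by rw [mul_comm]; exact Nat.even_mul_succ_self n
    obtain ⟨c, hc⟩ := he
    simp only [Nat.add_sub_cancel]
    omega

lemma choose_two_succ (n : ℕ) : (n + 1).choose 2 = n + n.choose 2 := by
  have h : (n + 1).choose 2 = n.choose 1 + n.choose 2 := Nat.choose_succ_succ n 1
  rw [h, Nat.choose_one_right]

lemma sum_range_eq_choose (k : ℕ) : ∑ x ∈ range k, x = k.choose 2 := by
  induction k with
  | zero => simp
  | succ n ih =>
    rw [Finset.sum_range_succ, choose_two_succ]
    omega

lemma PP_pos (s : Finset ℕ) : 0 < PP s := by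
  apply Finset.prod_pos
  intro p hp
  simp only [pairs, Finset.mem_filter] at hp
  omega

lemma PP_ne (s : Finset ℕ) : PP s ≠ 0 := (PP_pos s).ne'

lemma FF_pos (s : Finset ℕ) : 0 < FF s :=
  Finset.prod_pos fun x _ => Nat.factorial_pos x

lemma FF_ne (s : Finset ℕ) : FF s ≠ 0 := (FF_pos s).ne'

lemma card_le_max {s : Finset ℕ} (hs : s.Nonempty) : s.card ≤ s.max' hs + 1 := by
  have hsub : s ⊆ range (s.max' hs + 1) := by
    intro x hx
    rw [mem_range, Nat.lt_succ_iff]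
    exact le_max' s x hx
  simpa using card_le_card hsub

lemma choose_two_le_sum (s : Finset ℕ) : s.card.choose 2 ≤ ∑ x ∈ s, x := by
  induction s using Finset.strongInduction with
  | _ s ih =>
    rcases s.eq_empty_or_nonempty with rfl | hs
    · simp
    · have hmax := s.max'_mem hs
      have h1 : s.card ≤ s.max' hs + 1 := card_le_max hs
      have h2 := ih (s.erase (s.max' hs)) (erase_ssubset hmax)
      have h3 : (s.erase (s.max' hs)).card = s.card - 1 := card_erase_of_mem hmax
      have h4 : ∑ x ∈ s, x = s.max' hs + ∑ x ∈ s.erase (s.max' hs), x :=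
        (add_sum_erase s id hmax).symm
      have hc : 0 < s.card := card_pos.mpr hs
      have h5 : s.card.choose 2 = (s.card - 1) + (s.card - 1).choose 2 := by
        have := choose_two_succ (s.card - 1)
        have hsc : s.card - 1 + 1 = s.card := by omega
        rw [hsc] at this
        exact this
      rw [h3] at h2
      omega

lemma nn_spec (s : Finset ℕ) : nn s + s.card.choose 2 = ∑ x ∈ s, x := by
  have := choose_two_le_sum s
  unfold nn
  omega

lemma eq_range_of_sum_eq_choose (s : Finset ℕ) :
    ∑ x ∈ s, x = s.card.choose 2 → s = range s.card := by
  induction s using Finset.strongInduction with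
  | _ s ih =>
      intro h
      rcases s.eq_empty_or_nonempty with rfl | hs
      · simp
      · have hmax := s.max'_mem hs
        have h1 : s.card ≤ s.max' hs + 1 := card_le_max hs
        have h2 := choose_two_le_sum (s.erase (s.max' hs))
        have h3 : (s.erase (s.max' hs)).card = s.card - 1 := card_erase_of_mem hmax
        have h4 : ∑ x ∈ s, x = s.max' hs + ∑ x ∈ s.erase (s.max' hs), x :=
          (add_sum_erase s id hmax).symm
        have hc : 0 < s.card := card_pos.mpr hs
        have h5 : s.card.choose 2 = (s.card - 1) + (s.card - 1).choose 2 := by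
          have := choose_two_succ (s.card - 1)
          have hsc : s.card - 1 + 1 = s.card := by omega
          rw [hsc] at this
          exact this
        rw [h3] at h2
        -- max' = card - 1 and erase sums to its choose
        have hmx : s.max' hs = s.card - 1 := by omega
        have herase : ∑ x ∈ s.erase (s.max' hs), x = (s.card - 1).choose 2 := by omega
        have hrec := ih (s.erase (s.max' hs)) (erase_ssubset hmax) (by rw [h3]; exact herase)
        have hins : s = insert (s.max' hs) (s.erase (s.max' hs)) := (insert_erase hmax).symm
        have hrg : range s.card = insert (s.card - 1) (range (s.card - 1)) := by
          have hsc : s.card = (s.card - 1) + 1 := by omega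
          rw [hsc, Finset.range_add_one]
          congr 1 <;> omega
        conv_lhs => rw [hins]
        rw [hrec, h3, hmx, hrg]

lemma sum_eq_choose_iff (s : Finset ℕ) :
    ∑ x ∈ s, x = s.card.choose 2 ↔ s = range s.card := by
  constructor
  · exact eq_range_of_sum_eq_choose s
  · intro h
    calc ∑ x ∈ s, x = ∑ x ∈ range s.card, x := by conv_lhs => rw [h]
    _ = s.card.choose 2 := sum_range_eq_choose _

lemma eq_range_of_nn_eq_zero {s : Finset ℕ} (h : nn s = 0) : s = range s.card := by
  rw [← sum_eq_choose_iff]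
  have := nn_spec s
  omega

lemma hookset_of_nn_eq_one {s : Finset ℕ} (h : nn s = 1) : IsHookSet s := by
  have hsum : ∑ x ∈ s, x = s.card.choose 2 + 1 := by
    have := nn_spec s; omega
  have hs : s.Nonempty := by
    rcases s.eq_empty_or_nonempty with rfl | hs
    · simp [nn] at h
    · exact hs
  have hmax := s.max'_mem hs
  have h1 : s.card ≤ s.max' hs + 1 := card_le_max hs
  have h2 := choose_two_le_sum (s.erase (s.max' hs))
  have h3 : (s.erase (s.max' hs)).card = s.card - 1 := card_erase_of_mem hmax
  have h4 : ∑ x ∈ s, x = s.max' hs + ∑ x ∈ s.erase (s.max' hs), x :=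
    (add_sum_erase s id hmax).symm
  have hc : 0 < s.card := card_pos.mpr hs
  have h5 : s.card.choose 2 = (s.card - 1) + (s.card - 1).choose 2 := by
    have := choose_two_succ (s.card - 1)
    have hsc : s.card - 1 + 1 = s.card := by omega
    rw [hsc] at this
    exact this
  rw [h3] at h2
  -- max' ∈ {card - 1, card}
  have hmx : s.max' hs = s.card - 1 ∨ s.max' hs = s.card := by omega
  rcases hmx with hmx | hmx
  · -- impossible: s ⊆ range card with equal card forces s = range card, sum too small
    exfalso
    have hsub : s ⊆ range s.card := by
      intro x hx
      rw [mem_range]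
      have := s.le_max' x hx
      omega
    have hseq : s = range s.card := eq_of_subset_of_card_le hsub (by simp)
    have h9 : ∑ x ∈ s, x = ∑ x ∈ range s.card, x := by conv_lhs => rw [hseq]
    have h10 := sum_range_eq_choose s.card
    omega
  · refine ⟨s.card, s.card - 1, by omega, le_refl _, ?_⟩
    have herase : ∑ x ∈ s.erase (s.max' hs), x = (s.card - 1).choose 2 := by omega
    have hrec : s.erase (s.max' hs) = range (s.card - 1) := by
      have h := eq_range_of_sum_eq_choose (s.erase (s.max' hs)) (by rw [h3, herase])
      rwa [h3] at h
    have hins : s = insert (s.max' hs) (s.erase (s.max' hs)) := (insert_erase hmax).symm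
    conv_lhs => rw [hins]
    rw [hrec, hmx]
    congr 1
    ext x
    simp only [mem_erase, mem_range]
    omega

lemma card_pairs (s : Finset ℕ) : (pairs s).card = s.card.choose 2 := by
  classical
  have hsplit : s.offDiag = pairs s ∪ s.offDiag.filter (fun p => p.1 < p.2) := by
    ext p
    simp only [pairs, mem_union, mem_filter, mem_offDiag]
    constructor
    · rintro ⟨h1, h2, h3⟩
      rcases lt_or_gt_of_ne h3 with h | h
      · exact Or.inr ⟨⟨h1, h2, h3⟩, h⟩
      · exact Or.inl ⟨⟨h1, h2, h3⟩, h⟩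
    · rintro (⟨h, _⟩ | ⟨h, _⟩) <;> exact h
  have hdisj : Disjoint (pairs s) (s.offDiag.filter (fun p => p.1 < p.2)) := by
    rw [Finset.disjoint_left]
    intro p hp hq
    simp only [pairs, mem_filter] at hp hq
    omega
  have hcardeq : (s.offDiag.filter (fun p => p.1 < p.2)).card = (pairs s).card := by
    apply Finset.card_bij (fun p _ => Prod.swap p)
    · intro p hp
      simp only [pairs, mem_filter, mem_offDiag] at hp ⊢
      exact ⟨⟨hp.1.2.1, hp.1.1, hp.1.2.2.symm⟩, hp.2⟩
    · intro p _ q _ hpq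
      exact Prod.swap_injective hpq
    · intro p hp
      refine ⟨Prod.swap p, ?_, by simp⟩
      simp only [pairs, mem_filter, mem_offDiag] at hp ⊢
      exact ⟨⟨hp.1.2.1, hp.1.1, hp.1.2.2.symm⟩, hp.2⟩
  have hoff : s.offDiag.card = s.card * s.card - s.card := Finset.offDiag_card s
  have hcu : s.offDiag.card = (pairs s).card + (s.offDiag.filter (fun p => p.1 < p.2)).card := by
    conv_lhs => rw [hsplit]
    exact card_union_of_disjoint hdisj
  have h5 : 2 * s.card.choose 2 = s.card * (s.card - 1) := two_mul_choose_two _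
  have h6 : s.card * (s.card - 1) = s.card * s.card - s.card := by
    cases s.card with
    | zero => simp
    | succ n =>
      have e1 : (n + 1) * (n + 1) = (n + 1) * n + (n + 1) := by ring
      simp only [Nat.add_sub_cancel]
      omega
  omega

section Det

open Matrix Polynomial

variable {k : ℕ} (s : Finset ℕ) (hk : s.card = k)

/-- enumeration facts -/
lemma enum_image : Finset.univ.image (fun i : Fin k => s.orderEmbOfFin hk i) = s := by
  ext x
  simp only [mem_image, mem_univ, true_and]
  constructor
  · rintro ⟨i, rfl⟩
    exact s.orderEmbOfFin_mem hk i
  · intro hx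
    have : x ∈ Set.range (s.orderEmbOfFin hk) := by
      rw [Finset.range_orderEmbOfFin]
      exact hx
    obtain ⟨i, hi⟩ := this
    exact ⟨i, hi⟩

lemma FF_enum : FF s = ∏ i : Fin k, (s.orderEmbOfFin hk i).factorial := by
  unfold FF
  conv_lhs => rw [← enum_image s hk]
  exact prod_image fun i _ j _ h => (s.orderEmbOfFin hk).injective h

lemma sum_enum : ∑ x ∈ s, x = ∑ i : Fin k, (s.orderEmbOfFin hk i) := by
  conv_lhs => rw [← enum_image s hk]
  exact sum_image fun i _ j _ h => (s.orderEmbOfFin hk).injective h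

lemma sum_fin_choose (k : ℕ) : ∑ i : Fin k, (i : ℕ) = k.choose 2 :=
  (Fin.sum_univ_eq_sum_range (fun i => i) k).trans (sum_range_eq_choose k)

lemma pairs_enum :
    pairs s = ((univ : Finset (Fin k)).sigma (fun i => Ioi i)).image
      (fun q => ((s.orderEmbOfFin hk q.2 : ℕ), (s.orderEmbOfFin hk q.1 : ℕ))) := by
  ext ⟨x, y⟩
  constructor
  · intro h
    simp only [pairs, mem_filter, mem_offDiag] at h
    obtain ⟨⟨hx, hy, _⟩, hlt⟩ := h
    have hx' : x ∈ Set.range (s.orderEmbOfFin hk) := by rw [Finset.range_orderEmbOfFin]; exact hx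
    have hy' : y ∈ Set.range (s.orderEmbOfFin hk) := by rw [Finset.range_orderEmbOfFin]; exact hy
    obtain ⟨j, rfl⟩ := hx'
    obtain ⟨i, rfl⟩ := hy'
    have hij : i < j := (s.orderEmbOfFin hk).strictMono.lt_iff_lt.mp hlt
    rw [mem_image]
    exact ⟨⟨i, j⟩, by simp [mem_sigma, mem_Ioi, hij], rfl⟩
  · intro h
    rw [mem_image] at h
    obtain ⟨⟨i, j⟩, hq, heq⟩ := h
    simp only [mem_sigma, mem_univ, mem_Ioi, true_and] at hq
    cases heq
    simp only [pairs, mem_filter, mem_offDiag]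
    refine ⟨⟨s.orderEmbOfFin_mem hk j, s.orderEmbOfFin_mem hk i, ?_⟩, ?_⟩
    · intro hcon
      exact absurd ((s.orderEmbOfFin hk).injective hcon) (by omega)
    · exact (s.orderEmbOfFin hk).strictMono hq

lemma PP_enum :
    PP s = ∏ q ∈ (univ : Finset (Fin k)).sigma (fun i => Ioi i),
      ((s.orderEmbOfFin hk q.2 : ℕ) - (s.orderEmbOfFin hk q.1 : ℕ)) := by
  unfold PP
  rw [pairs_enum s hk, prod_image]
  intro q hq q' hq' h
  simp only [Prod.mk.injEq] at h
  have h1 := (s.orderEmbOfFin hk).injective h.1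
  have h2 := (s.orderEmbOfFin hk).injective h.2
  simp only [mem_coe, mem_sigma, mem_univ, mem_Ioi, true_and] at hq hq'
  exact Sigma.ext h2 (by rw [h1])

/-- key permutation divisibility -/
lemma perm_dvd (σ : Equiv.Perm (Fin k)) :
    FF s ∣ (nn s).factorial * ∏ i : Fin k,
      ((s.orderEmbOfFin hk (σ i) : ℕ).descFactorial (i : ℕ)) := by
  classical
  set E : Fin k → ℕ := fun i => s.orderEmbOfFin hk i with hE
  by_cases hgood : ∀ i : Fin k, (i : ℕ) ≤ E (σ i)
  · -- identity case
    have hFF : FF s = ∏ i : Fin k, (E (σ i)).factorial := by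
      rw [FF_enum s hk]
      exact (Equiv.prod_comp σ (fun i => (E i).factorial)).symm
    have hsummain : ∑ i : Fin k, (E (σ i) - (i : ℕ)) = nn s := by
      have h1 : ∑ i : Fin k, (E (σ i) - (i : ℕ)) + ∑ i : Fin k, (i : ℕ)
          = ∑ i : Fin k, E (σ i) := by
        rw [← Finset.sum_add_distrib]
        apply sum_congr rfl
        intro i _
        have := hgood i
        omega
      have h2 : ∑ i : Fin k, E (σ i) = ∑ i : Fin k, E i := Equiv.sum_comp σ E
      have h3 : ∑ x ∈ s, x = ∑ i : Fin k, E i := sum_enum s hk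
      have h4 := nn_spec s
      have h5 := sum_fin_choose k
      rw [hk] at h4
      omega
    have hfac : ∀ i : Fin k, (E (σ i)).factorial
        = (E (σ i)).descFactorial (i : ℕ) * (E (σ i) - (i : ℕ)).factorial := by
      intro i
      rw [mul_comm]
      exact (Nat.factorial_mul_descFactorial (hgood i)).symm
    rw [hFF, prod_congr rfl (fun i _ => hfac i), Finset.prod_mul_distrib]
    have hdvd : ∏ i : Fin k, (E (σ i) - (i : ℕ)).factorial ∣ (nn s).factorial := by
      rw [← hsummain]
      exact Nat.prod_factorial_dvd_factorial_sum _ _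
    calc (∏ i : Fin k, (E (σ i)).descFactorial (i : ℕ))
        * ∏ i : Fin k, (E (σ i) - (i : ℕ)).factorial
        ∣ (∏ i : Fin k, (E (σ i)).descFactorial (i : ℕ)) * (nn s).factorial :=
          mul_dvd_mul_left _ hdvd
      _ = (nn s).factorial * ∏ i : Fin k, (E (σ i)).descFactorial (i : ℕ) := mul_comm _ _
  · -- some descFactorial is zero
    push_neg at hgood
    obtain ⟨i, hi⟩ := hgood
    have : (E (σ i)).descFactorial (i : ℕ) = 0 :=
      Nat.descFactorial_eq_zero_iff_lt.mpr hi
    have hzero : ∏ i : Fin k, (E (σ i)).descFactorial (i : ℕ) = 0 :=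
      Finset.prod_eq_zero (mem_univ i) this
    rw [hzero, mul_zero]
    exact dvd_zero _

/-- determinant lemma: integrality -/
lemma FF_dvd (s : Finset ℕ) : FF s ∣ (nn s).factorial * PP s := by
  classical
  obtain ⟨k, hk⟩ : ∃ k, s.card = k := ⟨s.card, rfl⟩
  set E : Fin k → ℕ := fun i => s.orderEmbOfFin hk i with hE
  -- the matrix
  set M : Matrix (Fin k) (Fin k) ℤ :=
    Matrix.of (fun i j : Fin k => (descPochhammer ℤ (j : ℕ)).eval ((E i : ℤ))) with hM
  have hdet1 : M.det = (Matrix.vandermonde (fun i : Fin k => (E i : ℤ))).det := by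
    rw [hM]
    exact (Matrix.det_eval_matrixOfPolynomials_eq_det_vandermonde
      (fun i : Fin k => (E i : ℤ)) (fun j : Fin k => descPochhammer ℤ (j : ℕ))
      (fun j => descPochhammer_natDegree (R := ℤ) _)
      (fun j => monic_descPochhammer ℤ _)).symm
  have hvdm : (Matrix.vandermonde (fun i : Fin k => (E i : ℤ))).det = (PP s : ℤ) := by
    rw [Matrix.det_vandermonde, PP_enum s hk, Nat.cast_prod, Finset.prod_sigma]
    apply Finset.prod_congr rfl
    intro i _
    apply Finset.prod_congr rfl
    intro j hj
    rw [mem_Ioi] at hj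
    have hle : E i ≤ E j := ((s.orderEmbOfFin hk).strictMono hj).le
    rw [Nat.cast_sub hle]
  have hdvdZ : ((FF s : ℕ) : ℤ) ∣ ((nn s).factorial : ℤ) * M.det := by
    rw [Matrix.det_apply', Finset.mul_sum]
    apply Finset.dvd_sum
    intro σ _
    have hMentry : (∏ i : Fin k, M (σ i) i)
        = ((∏ i : Fin k, (E (σ i)).descFactorial (i : ℕ) : ℕ) : ℤ) := by
      rw [Nat.cast_prod]
      apply Finset.prod_congr rfl
      intro i _
      simp only [hM, Matrix.of_apply]
      exact descPochhammer_eval_eq_descFactorial ℤ (E (σ i)) (i : ℕ)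
    rw [hMentry]
    have hN : FF s ∣ (nn s).factorial * ∏ i : Fin k, ((E (σ i)).descFactorial (i : ℕ)) :=
      perm_dvd s hk σ
    have hZ : ((FF s : ℕ) : ℤ) ∣ (((nn s).factorial * ∏ i : Fin k,
        ((E (σ i)).descFactorial (i : ℕ)) : ℕ) : ℤ) := Int.natCast_dvd_natCast.mpr hN
    rw [Nat.cast_mul] at hZ
    rw [mul_left_comm]
    exact Dvd.dvd.mul_left hZ _
  rw [hdet1, hvdm] at hdvdZ
  rw [← Int.natCast_dvd_natCast]
  push_cast
  exact hdvdZ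

end Det

lemma v2_mul {a b : ℕ} (ha : a ≠ 0) (hb : b ≠ 0) : v2 (a * b) = v2 a + v2 b :=
  padicValNat.mul ha hb

lemma v2_fact_add (a b : ℕ) :
    v2 ((a + b).factorial) = v2 a.factorial + v2 b.factorial + v2 ((a + b).choose a) := by
  have key : (a + b).choose a * a.factorial * b.factorial = (a + b).factorial := by
    have h := Nat.add_choose_mul_factorial_mul_factorial b a
    rw [Nat.add_comm b a] at h
    rw [mul_right_comm]
    exact h
  have hch : (a + b).choose a ≠ 0 := by
    have := Nat.choose_pos (Nat.le_add_right a b)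
    omega
  have hf1 : a.factorial ≠ 0 := a.factorial_pos.ne'
  have hf2 : b.factorial ≠ 0 := b.factorial_pos.ne'
  rw [← key, v2_mul (Nat.mul_ne_zero hch hf1) hf2, v2_mul hch hf1]
  omega

lemma v2_fact_half (x : ℕ) : v2 x.factorial = x / 2 + v2 (x / 2).factorial := by
  haveI : Fact (Nat.Prime 2) := ⟨Nat.prime_two⟩
  rcases Nat.even_or_odd x with ⟨y, rfl⟩ | ⟨y, rfl⟩
  · have h1 : y + y = 2 * y := by ring
    have hd : (2 * y) / 2 = y := by omega
    rw [h1, hd]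
    unfold v2
    have key : padicValNat 2 (2 * y).factorial = padicValNat 2 y.factorial + y :=
      padicValNat_factorial_mul y
    omega
  · have hd : (2 * y + 1) / 2 = y := by omega
    rw [hd]
    unfold v2
    have key : padicValNat 2 (2 * y).factorial = padicValNat 2 y.factorial + y :=
      padicValNat_factorial_mul y
    have key2 : padicValNat 2 (2 * y + 1).factorial = padicValNat 2 (2 * y).factorial :=
      padicValNat_factorial_mul_add y (by omega)
    omega

lemma v2_odd {x : ℕ} (h : Odd x) : v2 x = 0 := by
  apply padicValNat.eq_zero_of_not_dvd
  rw [Nat.odd_iff] at h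
  omega

lemma odd_choose_pow2 {t i : ℕ} (h : Odd ((2 ^ t).choose i)) (hi : i ≤ 2 ^ t) :
    i = 0 ∨ i = 2 ^ t := by
  rcases Nat.eq_zero_or_pos i with rfl | hpos
  · exact Or.inl rfl
  · right
    obtain ⟨j, rfl⟩ : ∃ j, i = j + 1 := ⟨i - 1, by omega⟩
    obtain ⟨n, hn⟩ : ∃ n, 2 ^ t = n + 1 := ⟨2 ^ t - 1, by have := Nat.two_pow_pos t; omega⟩
    have key : (n + 1) * n.choose j = (n + 1).choose (j + 1) * (j + 1) := by
      rw [← Nat.add_one_mul_choose_eq]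
    have hdvd : 2 ^ t ∣ (n + 1).choose (j + 1) * (j + 1) := by
      rw [← key, hn]
      exact Dvd.intro _ rfl
    have hcop : Nat.Coprime (2 ^ t) ((n + 1).choose (j + 1)) := by
      apply Nat.Coprime.pow_left
      rw [hn] at h
      rw [Nat.odd_iff] at h
      rw [Nat.Prime.coprime_iff_not_dvd Nat.prime_two]
      omega
    have : 2 ^ t ∣ (j + 1) := (Nat.Coprime.dvd_of_dvd_mul_left hcop hdvd)
    have := Nat.le_of_dvd (by omega) this
    omega

def B0 (s : Finset ℕ) : Finset ℕ := (s.filter (fun x => x % 2 = 0)).image (· / 2)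
def B1 (s : Finset ℕ) : Finset ℕ := (s.filter (fun x => x % 2 = 1)).image (· / 2)

lemma even_injOn (s : Finset ℕ) :
    Set.InjOn (· / 2) ↑(s.filter (fun x => x % 2 = 0)) := by
  intro x hx y hy hxy
  simp only [coe_filter, Set.mem_setOf_eq] at hx hy
  have hxy' : x / 2 = y / 2 := hxy
  omega

lemma odd_injOn (s : Finset ℕ) :
    Set.InjOn (· / 2) ↑(s.filter (fun x => x % 2 = 1)) := by
  intro x hx y hy hxy
  simp only [coe_filter, Set.mem_setOf_eq] at hx hy
  have hxy' : x / 2 = y / 2 := hxy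
  omega

lemma filter_odd_eq_not (s : Finset ℕ) :
    s.filter (fun x => x % 2 = 1) = s.filter (fun x => ¬ x % 2 = 0) := by
  apply filter_congr
  intro x _
  constructor
  · intro h; omega
  · intro h; omega

lemma card_split (s : Finset ℕ) : (B0 s).card + (B1 s).card = s.card := by
  unfold B0 B1
  rw [card_image_of_injOn (even_injOn s), card_image_of_injOn (odd_injOn s),
    filter_odd_eq_not]
  exact card_filter_add_card_filter_not _

/-- helper: v2 of a product -/
lemma v2_prod {α : Type*} (t : Finset α) (f : α → ℕ) (hf : ∀ x ∈ t, f x ≠ 0) :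
    v2 (∏ x ∈ t, f x) = ∑ x ∈ t, v2 (f x) := by
  classical
  induction t using Finset.cons_induction with
  | empty => simp [v2]
  | cons a t ha ih =>
    rw [Finset.prod_cons, Finset.sum_cons,
      v2_mul (hf a (mem_cons_self a t)) (Finset.prod_ne_zero_iff.mpr
        (fun x hx => hf x (mem_cons.mpr (Or.inr hx)))),
      ih (fun x hx => hf x (mem_cons.mpr (Or.inr hx)))]

lemma sum_split (s : Finset ℕ) :
    ∑ x ∈ s, x = 2 * (∑ b ∈ B0 s, b) + 2 * (∑ b ∈ B1 s, b) + (B1 s).card := by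
  have hE : ∑ b ∈ B0 s, b = ∑ x ∈ s.filter (fun x => x % 2 = 0), x / 2 :=
    sum_image fun x hx y hy h => even_injOn s (by simpa using hx) (by simpa using hy) h
  have hO : ∑ b ∈ B1 s, b = ∑ x ∈ s.filter (fun x => x % 2 = 1), x / 2 :=
    sum_image fun x hx y hy h => odd_injOn s (by simpa using hx) (by simpa using hy) h
  have hcard : (B1 s).card = (s.filter (fun x => x % 2 = 1)).card := by
    unfold B1; exact card_image_of_injOn (odd_injOn s)
  have hsplit : ∑ x ∈ s, x = ∑ x ∈ s.filter (fun x => x % 2 = 0), x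
      + ∑ x ∈ s.filter (fun x => x % 2 = 1), x := by
    rw [filter_odd_eq_not]
    exact (sum_filter_add_sum_filter_not s _ _).symm
  have hEv : ∑ x ∈ s.filter (fun x => x % 2 = 0), x
      = 2 * ∑ x ∈ s.filter (fun x => x % 2 = 0), x / 2 := by
    rw [Finset.mul_sum]
    apply sum_congr rfl
    intro x hx
    simp only [mem_filter] at hx
    omega
  have hOd : ∑ x ∈ s.filter (fun x => x % 2 = 1), x
      = 2 * (∑ x ∈ s.filter (fun x => x % 2 = 1), x / 2)
        + (s.filter (fun x => x % 2 = 1)).card := by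
    have e1 : ∑ x ∈ s.filter (fun x => x % 2 = 1), x
        = ∑ x ∈ s.filter (fun x => x % 2 = 1), (2 * (x / 2) + 1) := by
      apply sum_congr rfl
      intro x hx
      simp only [mem_filter] at hx
      omega
    rw [e1, Finset.sum_add_distrib, ← Finset.mul_sum]
    simp
  omega

lemma v2FF_split (s : Finset ℕ) :
    v2 (FF s) = (∑ b ∈ B0 s, b) + (∑ b ∈ B1 s, b) + v2 (FF (B0 s)) + v2 (FF (B1 s)) := by
  have h0 : v2 (FF s) = ∑ x ∈ s, v2 x.factorial :=
    v2_prod s _ (fun x _ => x.factorial_pos.ne')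
  have h1 : v2 (FF (B0 s)) = ∑ b ∈ B0 s, v2 b.factorial :=
    v2_prod _ _ (fun x _ => x.factorial_pos.ne')
  have h2 : v2 (FF (B1 s)) = ∑ b ∈ B1 s, v2 b.factorial :=
    v2_prod _ _ (fun x _ => x.factorial_pos.ne')
  have h3 : ∀ t : Finset ℕ, (Set.InjOn (· / 2) ↑t) →
      ∑ b ∈ t.image (· / 2), (b + v2 b.factorial) = ∑ x ∈ t, (x / 2 + v2 (x / 2).factorial) := by
    intro t ht
    exact sum_image fun x hx y hy h => ht (by simpa using hx) (by simpa using hy) h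
  have h4 : ∑ x ∈ s, v2 x.factorial
      = ∑ x ∈ s, (x / 2 + v2 (x / 2).factorial) := by
    apply sum_congr rfl
    intro x _
    exact v2_fact_half x
  have h5 : ∑ x ∈ s, (x / 2 + v2 (x / 2).factorial)
      = ∑ x ∈ s.filter (fun x => x % 2 = 0), (x / 2 + v2 (x / 2).factorial)
      + ∑ x ∈ s.filter (fun x => x % 2 = 1), (x / 2 + v2 (x / 2).factorial) := by
    rw [filter_odd_eq_not]
    exact (sum_filter_add_sum_filter_not s _ _).symm
  have h6 := h3 _ (even_injOn s)
  have h7 := h3 _ (odd_injOn s)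
  have h8 : ∑ b ∈ B0 s, (b + v2 b.factorial) = (∑ b ∈ B0 s, b) + ∑ b ∈ B0 s, v2 b.factorial :=
    Finset.sum_add_distrib
  have h9 : ∑ b ∈ B1 s, (b + v2 b.factorial) = (∑ b ∈ B1 s, b) + ∑ b ∈ B1 s, v2 b.factorial :=
    Finset.sum_add_distrib
  unfold B0 B1 at *
  omega

lemma pairs_image {t : Finset ℕ} {g : ℕ → ℕ} (hg : StrictMono g) :
    pairs (t.image g) = (pairs t).image (fun p => (g p.1, g p.2)) := by
  ext ⟨x, y⟩
  constructor
  · intro h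
    simp only [pairs, mem_filter, mem_offDiag, mem_image] at h
    obtain ⟨⟨hx, hy, hne⟩, hlt⟩ := h
    obtain ⟨a, ha, rfl⟩ := hx
    obtain ⟨b, hb, rfl⟩ := hy
    have hba : b < a := hg.lt_iff_lt.mp hlt
    rw [mem_image]
    refine ⟨(a, b), ?_, rfl⟩
    simp only [pairs, mem_filter, mem_offDiag]
    exact ⟨⟨ha, hb, by omega⟩, hba⟩
  · intro h
    rw [mem_image] at h
    obtain ⟨⟨a, b⟩, hab, heq⟩ := h
    simp only [pairs, mem_filter, mem_offDiag] at hab ⊢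
    obtain ⟨⟨ha, hb, hne⟩, hba⟩ := hab
    cases heq
    exact ⟨⟨mem_image_of_mem g ha, mem_image_of_mem g hb,
      fun hc => hne (hg.injective hc)⟩, hg hba⟩

lemma prod_pairs_image {t : Finset ℕ} {g : ℕ → ℕ} (hg : StrictMono g)
    (h2 : ∀ a b : ℕ, b < a → g a - g b = 2 * (a - b)) :
    PP (t.image g) = 2 ^ (t.card.choose 2) * PP t := by
  unfold PP
  rw [pairs_image hg, prod_image]
  · rw [← card_pairs]
    have : ∀ p ∈ pairs t, (g p.1 - g p.2) = 2 * (p.1 - p.2) := by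
      intro p hp
      simp only [pairs, mem_filter] at hp
      exact h2 p.1 p.2 hp.2
    rw [prod_congr rfl this, Finset.prod_mul_distrib, Finset.prod_const]
  · intro p hp q hq hpq
    simp only [Prod.mk.injEq] at hpq
    exact Prod.ext (hg.injective hpq.1) (hg.injective hpq.2)

lemma filter_even_eq (s : Finset ℕ) :
    s.filter (fun x => x % 2 = 0) = (B0 s).image (fun b => 2 * b) := by
  unfold B0
  rw [Finset.image_image]
  ext x
  simp only [mem_filter, mem_image, Function.comp_apply]
  constructor
  · intro ⟨hx, he⟩
    exact ⟨x, ⟨hx, he⟩, by omega⟩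
  · rintro ⟨y, ⟨hy, he⟩, rfl⟩
    constructor
    · have : 2 * (y / 2) = y := by omega
      rwa [this]
    · omega

lemma filter_odd_eq (s : Finset ℕ) :
    s.filter (fun x => x % 2 = 1) = (B1 s).image (fun b => 2 * b + 1) := by
  unfold B1
  rw [Finset.image_image]
  ext x
  simp only [mem_filter, mem_image, Function.comp_apply]
  constructor
  · intro ⟨hx, he⟩
    exact ⟨x, ⟨hx, he⟩, by omega⟩
  · rintro ⟨y, ⟨hy, he⟩, rfl⟩
    constructor
    · have : 2 * (y / 2) + 1 = y := by omega
      rwa [this]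
    · omega

lemma pairs_filter_subset {s : Finset ℕ} (p : ℕ → Prop) [DecidablePred p] :
    pairs (s.filter p) = (pairs s).filter (fun q => p q.1 ∧ p q.2) := by
  ext ⟨x, y⟩
  simp only [pairs, mem_filter, mem_offDiag]
  tauto

lemma v2PP_split (s : Finset ℕ) :
    v2 (PP s) = (B0 s).card.choose 2 + (B1 s).card.choose 2
      + v2 (PP (B0 s)) + v2 (PP (B1 s)) := by
  classical
  -- split pairs s into same-parity and cross pairs
  have hsplit : PP s = (∏ q ∈ (pairs s).filter (fun q => q.1 % 2 = q.2 % 2), (q.1 - q.2))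
      * ∏ q ∈ (pairs s).filter (fun q => ¬ q.1 % 2 = q.2 % 2), (q.1 - q.2) :=
    (prod_filter_mul_prod_filter_not _ _ _).symm
  have hsame : (pairs s).filter (fun q => q.1 % 2 = q.2 % 2)
      = (pairs (s.filter (fun x => x % 2 = 0))) ∪ (pairs (s.filter (fun x => x % 2 = 1))) := by
    rw [pairs_filter_subset, pairs_filter_subset]
    ext ⟨x, y⟩
    simp only [mem_filter, mem_union]
    constructor
    · rintro ⟨hq, he⟩
      rcases Nat.even_or_odd x with hx | hx
      · rw [Nat.even_iff] at hx
        exact Or.inl ⟨hq, by omega⟩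
      · rw [Nat.odd_iff] at hx
        exact Or.inr ⟨hq, by omega⟩
    · rintro (⟨hq, h1, h2⟩ | ⟨hq, h1, h2⟩) <;> exact ⟨hq, by omega⟩
  have hdisj : Disjoint (pairs (s.filter (fun x => x % 2 = 0)))
      (pairs (s.filter (fun x => x % 2 = 1))) := by
    rw [Finset.disjoint_left]
    intro q hq hq'
    rw [pairs_filter_subset] at hq hq'
    simp only [mem_filter] at hq hq'
    omega
  have hcross : v2 (∏ q ∈ (pairs s).filter (fun q => ¬ q.1 % 2 = q.2 % 2), (q.1 - q.2)) = 0 := by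
    rw [v2_prod]
    · apply Finset.sum_eq_zero
      intro q hq
      simp only [pairs, mem_filter, mem_offDiag] at hq
      apply v2_odd
      rw [Nat.odd_iff]
      omega
    · intro q hq
      simp only [pairs, mem_filter, mem_offDiag] at hq
      omega
  have hPE : (∏ q ∈ pairs (s.filter (fun x => x % 2 = 0)), (q.1 - q.2))
      = 2 ^ ((B0 s).card.choose 2) * PP (B0 s) := by
    have := prod_pairs_image (t := B0 s) (g := fun b => 2 * b)
      (fun a b hab => by beta_reduce; omega) (fun a b hab => by beta_reduce; omega)
    rw [filter_even_eq]
    exact this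
  have hPO : (∏ q ∈ pairs (s.filter (fun x => x % 2 = 1)), (q.1 - q.2))
      = 2 ^ ((B1 s).card.choose 2) * PP (B1 s) := by
    have := prod_pairs_image (t := B1 s) (g := fun b => 2 * b + 1)
      (fun a b hab => by beta_reduce; omega) (fun a b hab => by beta_reduce; omega)
    rw [filter_odd_eq]
    exact this
  have hPP2 : PP s = (2 ^ ((B0 s).card.choose 2) * PP (B0 s))
      * (2 ^ ((B1 s).card.choose 2) * PP (B1 s))
      * ∏ q ∈ (pairs s).filter (fun q => ¬ q.1 % 2 = q.2 % 2), (q.1 - q.2) := by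
    rw [hsplit, hsame, prod_union hdisj, hPE, hPO]
  have hposcross : (∏ q ∈ (pairs s).filter (fun q => ¬ q.1 % 2 = q.2 % 2), (q.1 - q.2)) ≠ 0 := by
    apply Finset.prod_ne_zero_iff.mpr
    intro q hq
    simp only [pairs, mem_filter, mem_offDiag] at hq
    omega
  have hA : (2 ^ ((B0 s).card.choose 2) * PP (B0 s)) ≠ 0 :=
    Nat.mul_ne_zero (pow_ne_zero _ (by norm_num)) (PP_ne _)
  have hB : (2 ^ ((B1 s).card.choose 2) * PP (B1 s)) ≠ 0 :=
    Nat.mul_ne_zero (pow_ne_zero _ (by norm_num)) (PP_ne _)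
  rw [hPP2, v2_mul (Nat.mul_ne_zero hA hB) hposcross, hcross,
    v2_mul hA hB,
    v2_mul (pow_ne_zero _ (by norm_num)) (PP_ne _),
    v2_mul (pow_ne_zero _ (by norm_num)) (PP_ne _)]
  have hv2pow : ∀ n : ℕ, v2 (2 ^ n) = n := fun n => by
    unfold v2
    haveI : Fact (Nat.Prime 2) := ⟨Nat.prime_two⟩
    simp [padicValNat.prime_pow]
  rw [hv2pow, hv2pow]
  have := PP_pos (B0 s)
  have := PP_pos (B1 s)
  omega

lemma recon_split (s : Finset ℕ) :
    s = (B0 s).image (fun b => 2 * b) ∪ (B1 s).image (fun b => 2 * b + 1) := by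
  rw [← filter_even_eq, ← filter_odd_eq, filter_odd_eq_not]
  exact (filter_union_filter_not_eq _ s).symm

lemma v2_le_of_dvd {a b : ℕ} (h : a ∣ b) (hb : b ≠ 0) : v2 a ≤ v2 b := by
  obtain ⟨t, rfl⟩ := h
  have ha : a ≠ 0 := by rintro rfl; simp at hb
  have ht : t ≠ 0 := by rintro rfl; simp at hb
  rw [v2_mul ha ht]
  omega

lemma v2_two : v2 2 = 1 := by
  unfold v2
  exact padicValNat.self (by norm_num)

lemma odd_of_v2_eq_zero {x : ℕ} (hx : x ≠ 0) (h : v2 x = 0) : Odd x := by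
  rw [Nat.odd_iff]
  by_contra hcon
  have h2 : 2 ∣ x := by omega
  obtain ⟨y, rfl⟩ := h2
  have hy : y ≠ 0 := by rintro rfl; simp at hx
  rw [v2_mul (by norm_num) hy, v2_two] at h
  omega

lemma choose_two_add (a b : ℕ) : (a + b).choose 2 = a.choose 2 + b.choose 2 + a * b := by
  induction b with
  | zero => simp
  | succ n ih =>
    have h1 : a + (n + 1) = (a + n) + 1 := by omega
    rw [h1, choose_two_succ, ih, choose_two_succ]
    ring

lemma core_ineq (a b : ℕ) : a * b ≤ a.choose 2 + b.choose 2 + b := by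
  have e2 := two_mul_choose_two a
  have e3 := two_mul_choose_two b
  rcases Nat.eq_zero_or_pos a with rfl | ha
  · simp
  rcases Nat.eq_zero_or_pos b with rfl | hb
  · simp
  zify [ha, hb] at e2 e3 ⊢
  rcases le_or_gt a b with hab | hab
  · nlinarith [sq_nonneg ((a : ℤ) - b)]
  · nlinarith [mul_nonneg (by push_cast; linarith : (0:ℤ) ≤ (a:ℤ) - b - 1)
      (by push_cast; linarith : (0:ℤ) ≤ (a:ℤ) - b)]

lemma core_zero {a b : ℕ} (h : a.choose 2 + b.choose 2 + b = a * b) :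
    b = a ∨ a = b + 1 := by
  have e2 := two_mul_choose_two a
  have e3 := two_mul_choose_two b
  rcases Nat.eq_zero_or_pos a with rfl | ha
  · simp at h
    have : b.choose 2 + b = 0 := by omega
    left
    omega
  rcases Nat.eq_zero_or_pos b with rfl | hb
  · simp at h
    right
    have := two_mul_choose_two a
    rcases Nat.lt_or_ge a 2 with h2 | h2
    · omega
    · exfalso
      have : a * (a - 1) ≥ 2 := by
        have h3 : a - 1 ≥ 1 := by omega
        calc a * (a - 1) ≥ 2 * 1 := Nat.mul_le_mul h2 h3
        _ = 2 := by norm_num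
      omega
  zify [ha, hb] at e2 e3 h
  have hprod : ((b : ℤ) - a) * ((b : ℤ) - a + 1) = 0 := by nlinarith
  rcases mul_eq_zero.mp hprod with h0 | h0
  · left; omega
  · right; omega

lemma inner_union_odd (k0 k1 g : ℕ) (hrel : k1 = k0 ∨ k0 = k1 + 1) (hg : g < k1) :
    (((range k1).erase g).image (fun b => 2 * b + 1)) ∪ ((range k0).image (fun b => 2 * b))
      = (range (k0 + k1)).erase (2 * g + 1) := by
  ext x
  simp only [mem_union, mem_image, mem_erase, mem_range]
  constructor
  · rintro (⟨b, ⟨hbg, hb⟩, rfl⟩ | ⟨b, hb, rfl⟩) <;> omega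
  · intro ⟨hne, hlt⟩
    rcases Nat.even_or_odd x with ⟨b, rfl⟩ | ⟨b, rfl⟩
    · right; exact ⟨b, by omega, by omega⟩
    · left; exact ⟨b, ⟨by omega, by omega⟩, by omega⟩

lemma inner_union_even (k0 k1 g : ℕ) (hrel : k1 = k0 ∨ k0 = k1 + 1) (hg : g < k0) :
    (((range k0).erase g).image (fun b => 2 * b)) ∪ ((range k1).image (fun b => 2 * b + 1))
      = (range (k0 + k1)).erase (2 * g) := by
  ext x
  simp only [mem_union, mem_image, mem_erase, mem_range]
  constructor
  · rintro (⟨b, ⟨hbg, hb⟩, rfl⟩ | ⟨b, hb, rfl⟩) <;> omega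
  · intro ⟨hne, hlt⟩
    rcases Nat.even_or_odd x with ⟨b, rfl⟩ | ⟨b, rfl⟩
    · left; exact ⟨b, ⟨by omega, by omega⟩, by omega⟩
    · right; exact ⟨b, by omega, by omega⟩

/-- The main arithmetic induction. -/
lemma main7 : ∀ m : ℕ, ∀ s : Finset ℕ, nn s = 2 ^ m →
    v2 ((nn s).factorial * PP s) = v2 (FF s) → IsHookSet s := by
  intro m
  induction m with
  | zero =>
    intro s h1 _
    exact hookset_of_nn_eq_one (by simpa using h1)
  | succ m ih =>
    intro s hnn hv2
    classical
    -- abbreviations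
    have hcard := card_split s
    have hsum := sum_split s
    have hnns := nn_spec s
    have hnn0 := nn_spec (B0 s)
    have hnn1 := nn_spec (B1 s)
    have hchadd := choose_two_add (B0 s).card (B1 s).card
    -- EQ1 : nn s + k0*k1 = 2 n0 + 2 n1 + C0 + C1 + k1
    have hEQ1 : nn s + (B0 s).card * (B1 s).card
        = 2 * nn (B0 s) + 2 * nn (B1 s) + (B0 s).card.choose 2 + (B1 s).card.choose 2
          + (B1 s).card := by
      rw [← hcard] at hnns
      omega
    have hcore := core_ineq (B0 s).card (B1 s).card
    -- define c
    set c : ℕ := nn s - 2 * (nn (B0 s) + nn (B1 s)) with hc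
    have hcdef : nn s = 2 * (nn (B0 s) + nn (B1 s)) + c := by omega
    -- EQ2
    have hv2' : v2 ((nn s).factorial) + v2 (PP s) = v2 (FF s) := by
      rw [← hv2, v2_mul (Nat.factorial_ne_zero _) (PP_ne s)]
    have hPPs := v2PP_split s
    have hFFs := v2FF_split s
    have hEQ2 : v2 ((nn s).factorial) + v2 (PP (B0 s)) + v2 (PP (B1 s))
        = nn (B0 s) + nn (B1 s) + v2 (FF (B0 s)) + v2 (FF (B1 s)) := by
      omega
    -- EQ3 : expand v2 (nn s)!
    have hEQ3 : v2 ((nn s).factorial)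
        = (nn (B0 s) + nn (B1 s)) + v2 ((nn (B0 s)).factorial) + v2 ((nn (B1 s)).factorial)
          + v2 ((nn (B0 s) + nn (B1 s)).choose (nn (B0 s)))
          + v2 (c.factorial)
          + v2 ((2 * (nn (B0 s) + nn (B1 s)) + c).choose (2 * (nn (B0 s) + nn (B1 s)))) := by
      have e1 : v2 ((2 * (nn (B0 s) + nn (B1 s)) + c).factorial)
          = v2 ((2 * (nn (B0 s) + nn (B1 s))).factorial) + v2 (c.factorial)
            + v2 ((2 * (nn (B0 s) + nn (B1 s)) + c).choose (2 * (nn (B0 s) + nn (B1 s)))) :=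
        v2_fact_add _ _
      have e2 : v2 ((2 * (nn (B0 s) + nn (B1 s))).factorial)
          = (nn (B0 s) + nn (B1 s)) + v2 ((nn (B0 s) + nn (B1 s)).factorial) := by
        have := v2_fact_half (2 * (nn (B0 s) + nn (B1 s)))
        rw [Nat.mul_div_cancel_left _ (by norm_num : 0 < 2)] at this
        omega
      have e3 : v2 ((nn (B0 s) + nn (B1 s)).factorial)
          = v2 ((nn (B0 s)).factorial) + v2 ((nn (B1 s)).factorial)
            + v2 ((nn (B0 s) + nn (B1 s)).choose (nn (B0 s))) := v2_fact_add _ _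
      rw [hcdef]
      omega
    -- upper bounds
    have hub0 : v2 (FF (B0 s)) ≤ v2 ((nn (B0 s)).factorial) + v2 (PP (B0 s)) := by
      have := v2_le_of_dvd (FF_dvd (B0 s))
        (Nat.mul_ne_zero (Nat.factorial_ne_zero _) (PP_ne _))
      rwa [v2_mul (Nat.factorial_ne_zero _) (PP_ne _)] at this
    have hub1 : v2 (FF (B1 s)) ≤ v2 ((nn (B1 s)).factorial) + v2 (PP (B1 s)) := by
      have := v2_le_of_dvd (FF_dvd (B1 s))
        (Nat.mul_ne_zero (Nat.factorial_ne_zero _) (PP_ne _))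
      rwa [v2_mul (Nat.factorial_ne_zero _) (PP_ne _)] at this
    -- squeeze
    have hsq0 : v2 (FF (B0 s)) = v2 ((nn (B0 s)).factorial) + v2 (PP (B0 s)) := by omega
    have hsq1 : v2 (FF (B1 s)) = v2 ((nn (B1 s)).factorial) + v2 (PP (B1 s)) := by omega
    have hvcfac : v2 (c.factorial) = 0 := by omega
    have hvch : v2 ((nn (B0 s) + nn (B1 s)).choose (nn (B0 s))) = 0 := by omega
    -- c is even, hence c = 0
    have hceven : c % 2 = 0 := by
      have : nn s = 2 * 2 ^ m := by rw [hnn]; ring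
      omega
    have hc0 : c = 0 := by
      by_contra hcne
      have hc2 : 2 ≤ c := by omega
      have : (2 : ℕ) ∣ c.factorial := Nat.dvd_factorial (by norm_num) hc2
      obtain ⟨y, hy⟩ := this
      have hyne : y ≠ 0 := by
        intro h0; rw [h0, mul_zero] at hy; exact Nat.factorial_ne_zero _ hy
      rw [hy, v2_mul (by norm_num) hyne, v2_two] at hvcfac
      omega
    -- n0 + n1 = 2^m
    have hsum2 : nn (B0 s) + nn (B1 s) = 2 ^ m := by
      have : nn s = 2 * 2 ^ m := by rw [hnn]; ring
      omega
    -- odd binomial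
    have hchoosepos : (nn (B0 s) + nn (B1 s)).choose (nn (B0 s)) ≠ 0 :=
      Nat.ne_of_gt (Nat.choose_pos (Nat.le_add_right _ _))
    have hodd : Odd ((2 ^ m).choose (nn (B0 s))) := by
      rw [← hsum2]
      exact odd_of_v2_eq_zero hchoosepos hvch
    have hcase := odd_choose_pow2 hodd (by omega)
    -- k relation from c = 0
    have hkrel : (B1 s).card = (B0 s).card ∨ (B0 s).card = (B1 s).card + 1 := by
      apply core_zero
      omega
    rcases hcase with hn0 | hn0
    · -- n0 = 0 : B0 = range k0, B1 is the hook set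
      have hB0 : B0 s = range (B0 s).card := eq_range_of_nn_eq_zero hn0
      have hn1 : nn (B1 s) = 2 ^ m := by omega
      have hpre1 : v2 ((nn (B1 s)).factorial * PP (B1 s)) = v2 (FF (B1 s)) := by
        rw [v2_mul (Nat.factorial_ne_zero _) (PP_ne _)]
        omega
      obtain ⟨M, g, hg, hM, hB1⟩ := ih (B1 s) hn1 hpre1
      -- reconstruct
      have hrec := recon_split s
      rw [hB0, hB1] at hrec
      rw [Finset.image_insert] at hrec
      rw [Finset.union_comm, Finset.insert_union] at hrec
      have hinner := inner_union_odd (B0 s).card (B1 s).card g hkrel hg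
      rw [hinner] at hrec
      refine ⟨2 * M + 1, 2 * g + 1, ?_, ?_, ?_⟩
      · rw [← hcard]; omega
      · rw [← hcard]; omega
      · rw [hcard] at hrec
        exact hrec
    · -- n0 = 2^m : B1 = range k1, B0 is the hook set
      have hn1 : nn (B1 s) = 0 := by omega
      have hB1 : B1 s = range (B1 s).card := eq_range_of_nn_eq_zero hn1
      have hpre0 : v2 ((nn (B0 s)).factorial * PP (B0 s)) = v2 (FF (B0 s)) := by
        rw [v2_mul (Nat.factorial_ne_zero _) (PP_ne _)]
        omega
      obtain ⟨M, g, hg, hM, hB0⟩ := ih (B0 s) hn0 hpre0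
      have hrec := recon_split s
      rw [hB0, hB1] at hrec
      rw [Finset.image_insert] at hrec
      rw [Finset.insert_union] at hrec
      have hinner := inner_union_even (B0 s).card (B1 s).card g hkrel hg
      rw [hinner] at hrec
      refine ⟨2 * M, 2 * g, ?_, ?_, ?_⟩
      · rw [← hcard]; omega
      · rw [← hcard]; omega
      · rw [hcard] at hrec
        exact hrec

section Young

variable (μ : YoungDiagram)

/-- number of rows -/
def kk : ℕ := μ.colLen 0

/-- beta numbers (decreasing) -/
def aa (i : ℕ) : ℕ := μ.rowLen i + (kk μ - 1 - i)

/-- the beta-set -/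
def AA : Finset ℕ := (range (kk μ)).image (aa μ)

lemma colLen_le_kk (j : ℕ) : μ.colLen j ≤ kk μ := μ.colLen_anti 0 j (Nat.zero_le j)

lemma rowLen_pos_of_lt_kk {i : ℕ} (hi : i < kk μ) : 0 < μ.rowLen i := by
  have h1 : (i, 0) ∈ μ := YoungDiagram.mem_iff_lt_colLen.mpr hi
  have h2 := YoungDiagram.mem_iff_lt_rowLen.mp h1
  omega

lemma mem_iff' {i j : ℕ} : (i, j) ∈ μ ↔ i < kk μ ∧ j < μ.rowLen i := by
  constructor
  · intro h
    have h1 := YoungDiagram.mem_iff_lt_rowLen.mp h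
    have h2 : (i, 0) ∈ μ := μ.up_left_mem (le_refl i) (Nat.zero_le j) h
    exact ⟨YoungDiagram.mem_iff_lt_colLen.mp h2, h1⟩
  · intro ⟨_, h2⟩
    exact YoungDiagram.mem_iff_lt_rowLen.mpr h2

lemma aa_strictAnti {i j : ℕ} (hij : i < j) (hj : j < kk μ) : aa μ j < aa μ i := by
  have h1 : μ.rowLen j ≤ μ.rowLen i := μ.rowLen_anti i j (le_of_lt hij)
  have h2 : 0 < μ.rowLen j := rowLen_pos_of_lt_kk μ hj
  unfold aa
  omega

lemma aa_injOn : Set.InjOn (aa μ) ↑(range (kk μ)) := by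
  intro i hi j hj h
  simp only [coe_range, Set.mem_Iio] at hi hj
  rcases lt_trichotomy i j with hij | rfl | hij
  · have := aa_strictAnti μ hij hj; omega
  · rfl
  · have := aa_strictAnti μ hij hi; omega

lemma aa_lt_iff {i j : ℕ} (hi : i < kk μ) (hj : j < kk μ) : aa μ j < aa μ i ↔ i < j := by
  constructor
  · intro h
    rcases lt_trichotomy i j with hij | rfl | hij
    · exact hij
    · omega
    · have := aa_strictAnti μ hij hi; omega
  · intro h; exact aa_strictAnti μ h hj

lemma card_AA : (AA μ).card = kk μ := by
  unfold AA
  rw [card_image_of_injOn (aa_injOn μ), card_range]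

lemma cells_decomp : μ.cells = (range (kk μ)).biUnion (fun i => {i} ×ˢ range (μ.rowLen i)) := by
  ext ⟨i, j⟩
  rw [YoungDiagram.mem_cells, mem_iff']
  simp only [mem_biUnion, mem_range, mem_product, mem_singleton]
  constructor
  · intro ⟨h1, h2⟩
    exact ⟨i, h1, rfl, h2⟩
  · rintro ⟨i', hi', rfl, hj⟩
    exact ⟨hi', hj⟩

lemma cells_decomp_disjoint : ∀ i ∈ range (kk μ), ∀ j ∈ range (kk μ), i ≠ j →
    Disjoint ({i} ×ˢ range (μ.rowLen i)) ({j} ×ˢ range (μ.rowLen j)) := by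
  intro i _ j _ hij
  rw [Finset.disjoint_left]
  rintro ⟨a, b⟩ ha hb
  simp only [mem_product, mem_singleton] at ha hb
  exact hij (ha.1.symm.trans hb.1)

lemma card_eq_sum_rowLens' : μ.card = ∑ i ∈ range (kk μ), μ.rowLen i := by
  show μ.cells.card = _
  rw [cells_decomp, card_biUnion (cells_decomp_disjoint μ)]
  apply sum_congr rfl
  intro i _
  rw [card_product, card_singleton, card_range, one_mul]

lemma sum_AA : ∑ x ∈ AA μ, x = μ.card + (kk μ).choose 2 := by
  unfold AA
  rw [sum_image (fun i hi j hj h => aa_injOn μ (by simpa using hi) (by simpa using hj) h)]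
  have h1 : ∀ i ∈ range (kk μ), aa μ i = μ.rowLen i + (kk μ - 1 - i) := fun i _ => rfl
  rw [sum_congr rfl h1, Finset.sum_add_distrib, ← card_eq_sum_rowLens']
  congr 1
  rw [← sum_range_eq_choose]
  exact Finset.sum_range_reflect (fun j => j) (kk μ)

lemma nn_AA : nn (AA μ) = μ.card := by
  unfold nn
  rw [card_AA, sum_AA]
  omega

/-- the complement function -/
def phi (j : ℕ) : ℕ := j + kk μ - μ.colLen j

lemma row_facts {i j : ℕ} (hj : j < μ.rowLen i) :
    i < μ.colLen j ∧ μ.colLen j ≤ kk μ :=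
  ⟨YoungDiagram.mem_iff_lt_colLen.mp (YoungDiagram.mem_iff_lt_rowLen.mpr hj), colLen_le_kk μ j⟩

lemma phi_lt {i j : ℕ} (hi : i < kk μ) (hj : j < μ.rowLen i) : phi μ j < aa μ i := by
  obtain ⟨h1, h2⟩ := row_facts μ hj
  unfold phi aa
  omega

lemma hook_eq {i j : ℕ} (hi : i < kk μ) (hj : j < μ.rowLen i) :
    aa μ i - phi μ j = hookLength μ i j := by
  obtain ⟨h1, h2⟩ := row_facts μ hj
  unfold phi aa hookLength
  omega

lemma phi_injOn {i : ℕ} : Set.InjOn (phi μ) ↑(range (μ.rowLen i)) := by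
  intro a ha b hb h
  simp only [coe_range, Set.mem_Iio] at ha hb
  have h1 : ∀ x y, x < y → y < μ.rowLen i → phi μ x < phi μ y := by
    intro x y hxy hy
    have hc : μ.colLen y ≤ μ.colLen x := μ.colLen_anti x y (le_of_lt hxy)
    have := (row_facts μ hy).2
    have := (row_facts μ (lt_trans hxy hy)).2
    have h0 : 0 < μ.colLen x := by
      have := (row_facts μ (lt_trans hxy hy)).1
      omega
    unfold phi
    omega
  rcases lt_trichotomy a b with hab | rfl | hab
  · have := h1 a b hab hb; omega
  · rfl
  · have := h1 b a hab ha; omega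

lemma phi_ne_aa {i j j' : ℕ} (hj : j < μ.rowLen i) (hij : i < j') (hj' : j' < kk μ) :
    phi μ j ≠ aa μ j' := by
  intro heq
  by_cases hmem : (j', j) ∈ μ
  · obtain ⟨_, h2⟩ := mem_iff' μ |>.mp hmem
    have h3 : j' < μ.colLen j := YoungDiagram.mem_iff_lt_colLen.mp hmem
    have h4 := colLen_le_kk μ j
    unfold phi aa at heq
    omega
  · have h2 : ¬ (j < μ.rowLen j') := fun hcon =>
      hmem (YoungDiagram.mem_iff_lt_rowLen.mpr hcon)
    have h3 : ¬ (j' < μ.colLen j) := fun hcon =>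
      hmem (YoungDiagram.mem_iff_lt_colLen.mpr hcon)
    have h4 : 0 < μ.rowLen j' := rowLen_pos_of_lt_kk μ hj'
    unfold phi aa at heq
    omega

lemma row_union {i : ℕ} (hi : i < kk μ) :
    ((range (μ.rowLen i)).image (phi μ)) ∪ ((Ioo i (kk μ)).image (aa μ))
      = range (aa μ i) := by
  have hdisj : Disjoint ((range (μ.rowLen i)).image (phi μ)) ((Ioo i (kk μ)).image (aa μ)) := by
    rw [Finset.disjoint_left]
    rintro x hx hy
    obtain ⟨j, hj, rfl⟩ := mem_image.mp hx
    obtain ⟨j', hj', heq⟩ := mem_image.mp hy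
    rw [mem_range] at hj
    rw [mem_Ioo] at hj'
    exact phi_ne_aa μ hj hj'.1 hj'.2 heq.symm
  apply Finset.eq_of_subset_of_card_le
  · intro x hx
    rw [mem_union] at hx
    rw [mem_range]
    rcases hx with hx | hx
    · obtain ⟨j, hj, rfl⟩ := mem_image.mp hx
      exact phi_lt μ hi (mem_range.mp hj)
    · obtain ⟨j', hj', rfl⟩ := mem_image.mp hx
      rw [mem_Ioo] at hj'
      exact aa_strictAnti μ hj'.1 hj'.2
  · rw [card_union_of_disjoint hdisj, card_range,
      card_image_of_injOn (phi_injOn μ),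
      card_image_of_injOn (Set.InjOn.mono (fun x hx => by
        simp only [coe_Ioo, Set.mem_Ioo] at hx
        simp only [coe_range, Set.mem_Iio]
        exact hx.2) (aa_injOn μ)),
      card_range, Nat.card_Ioo]
    unfold aa
    omega

lemma row_identity {i : ℕ} (hi : i < kk μ) :
    (∏ j ∈ range (μ.rowLen i), hookLength μ i j)
      * (∏ j ∈ Ioo i (kk μ), (aa μ i - aa μ j)) = (aa μ i).factorial := by
  have h1 : (aa μ i).factorial = ∏ x ∈ range (aa μ i), (aa μ i - x) := by
    rw [← prod_range_add_one_eq_factorial]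
    rw [← Finset.prod_range_reflect (fun x => aa μ i - x) (aa μ i)]
    apply prod_congr rfl
    intro x hx
    rw [mem_range] at hx
    omega
  rw [h1, ← row_union μ hi, prod_union (by
    rw [Finset.disjoint_left]
    rintro x hx hy
    obtain ⟨j, hj, rfl⟩ := mem_image.mp hx
    obtain ⟨j', hj', heq⟩ := mem_image.mp hy
    rw [mem_range] at hj
    rw [mem_Ioo] at hj'
    exact phi_ne_aa μ hj hj'.1 hj'.2 heq.symm)]
  rw [prod_image (fun a ha b hb h => phi_injOn μ (by simpa using ha) (by simpa using hb) h)]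
  rw [prod_image (fun a ha b hb h => aa_injOn μ
    (by simp only [coe_range, Set.mem_Iio]; exact (mem_Ioo.mp ha).2)
    (by simp only [coe_range, Set.mem_Iio]; exact (mem_Ioo.mp hb).2) h)]
  congr 1
  apply prod_congr rfl
  intro j hj
  exact (hook_eq μ hi (mem_range.mp hj)).symm

lemma pairs_AA :
    pairs (AA μ) = ((range (kk μ)).sigma (fun i => Ioo i (kk μ))).image
      (fun q => (aa μ q.1, aa μ q.2)) := by
  ext ⟨x, y⟩
  constructor
  · intro h
    simp only [pairs, mem_filter, mem_offDiag] at h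
    obtain ⟨⟨hx, hy, _⟩, hlt⟩ := h
    obtain ⟨i, hi, rfl⟩ := mem_image.mp hx
    obtain ⟨j, hj, rfl⟩ := mem_image.mp hy
    rw [mem_range] at hi hj
    have hij : i < j := (aa_lt_iff μ hi hj).mp hlt
    rw [mem_image]
    refine ⟨⟨i, j⟩, ?_, rfl⟩
    simp only [mem_sigma, mem_range, mem_Ioo]
    exact ⟨hi, hij, hj⟩
  · intro h
    rw [mem_image] at h
    obtain ⟨⟨i, j⟩, hq, heq⟩ := h
    simp only [mem_sigma, mem_range, mem_Ioo] at hq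
    cases heq
    simp only [pairs, mem_filter, mem_offDiag]
    have hlt := aa_strictAnti μ hq.2.1 hq.2.2
    refine ⟨⟨?_, ?_, by omega⟩, hlt⟩
    · exact mem_image_of_mem _ (mem_range.mpr hq.1)
    · exact mem_image_of_mem _ (mem_range.mpr hq.2.2)

lemma PP_AA :
    PP (AA μ) = ∏ i ∈ range (kk μ), ∏ j ∈ Ioo i (kk μ), (aa μ i - aa μ j) := by
  unfold PP
  rw [pairs_AA, prod_image, Finset.prod_sigma]
  intro q hq q' hq' h
  simp only [mem_coe, mem_sigma, mem_range, mem_Ioo] at hq hq'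
  simp only [Prod.mk.injEq] at h
  have h1 : q.1 = q'.1 := aa_injOn μ
    (by simp only [coe_range, Set.mem_Iio]; exact hq.1)
    (by simp only [coe_range, Set.mem_Iio]; exact hq'.1) h.1
  have h2 : q.2 = q'.2 := aa_injOn μ
    (by simp only [coe_range, Set.mem_Iio]; exact hq.2.2)
    (by simp only [coe_range, Set.mem_Iio]; exact hq'.2.2) h.2
  exact Sigma.ext h1 (by rw [h2])

lemma FF_AA : FF (AA μ) = ∏ i ∈ range (kk μ), (aa μ i).factorial := by
  unfold FF AA
  exact prod_image (fun i hi j hj h => aa_injOn μ (by simpa using hi) (by simpa using hj) h)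

lemma hook_prod_identity :
    (∏ c ∈ μ.cells, hookLength μ c.1 c.2) * PP (AA μ) = FF (AA μ) := by
  have hcells : ∏ c ∈ μ.cells, hookLength μ c.1 c.2
      = ∏ i ∈ range (kk μ), ∏ j ∈ range (μ.rowLen i), hookLength μ i j := by
    rw [cells_decomp, prod_biUnion (cells_decomp_disjoint μ)]
    apply prod_congr rfl
    intro i _
    rw [Finset.prod_product, prod_singleton]
  rw [hcells, PP_AA, FF_AA, ← Finset.prod_mul_distrib]
  apply prod_congr rfl
  intro i hi
  exact row_identity μ (mem_range.mp hi)

end Young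

/-- uniqueness of strictly decreasing enumerations -/
lemma decr_enum_unique : ∀ (k : ℕ) (f g : ℕ → ℕ),
    (∀ i j, i < j → j < k → f j < f i) → (∀ i j, i < j → j < k → g j < g i) →
    (range k).image f = (range k).image g → ∀ i < k, f i = g i := by
  intro k
  induction k with
  | zero => intro f g _ _ _ i hi; omega
  | succ n ih =>
    intro f g hf hg him i hik
    -- first coordinates agree
    have hmaxf : ∀ j < n + 1, f j ≤ f 0 := by
      intro j hj
      rcases Nat.eq_zero_or_pos j with rfl | hpos
      · exact le_refl _
      · exact le_of_lt (hf 0 j hpos hj)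
    have hmaxg : ∀ j < n + 1, g j ≤ g 0 := by
      intro j hj
      rcases Nat.eq_zero_or_pos j with rfl | hpos
      · exact le_refl _
      · exact le_of_lt (hg 0 j hpos hj)
    have hf0 : f 0 ∈ (range (n + 1)).image g := by
      rw [← him]
      exact mem_image_of_mem f (mem_range.mpr (by omega))
    have hg0 : g 0 ∈ (range (n + 1)).image f := by
      rw [him]
      exact mem_image_of_mem g (mem_range.mpr (by omega))
    obtain ⟨j1, hj1, hfg1⟩ := mem_image.mp hf0
    obtain ⟨j2, hj2, hfg2⟩ := mem_image.mp hg0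
    rw [mem_range] at hj1 hj2
    have heq0 : f 0 = g 0 := by
      have := hmaxg j1 hj1
      have := hmaxf j2 hj2
      omega
    -- tails
    have htailf : ((range (n + 1)).image f).erase (f 0)
        = (range n).image (fun i => f (i + 1)) := by
      ext x
      simp only [mem_erase, mem_image, mem_range]
      constructor
      · rintro ⟨hne, j, hj, rfl⟩
        rcases Nat.eq_zero_or_pos j with rfl | hpos
        · omega
        · exact ⟨j - 1, by omega, by congr 1; omega⟩
      · rintro ⟨j, hj, rfl⟩
        have := hf 0 (j + 1) (by omega) (by omega)
        exact ⟨by omega, j + 1, by omega, rfl⟩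
    have htailg : ((range (n + 1)).image g).erase (g 0)
        = (range n).image (fun i => g (i + 1)) := by
      ext x
      simp only [mem_erase, mem_image, mem_range]
      constructor
      · rintro ⟨hne, j, hj, rfl⟩
        rcases Nat.eq_zero_or_pos j with rfl | hpos
        · omega
        · exact ⟨j - 1, by omega, by congr 1; omega⟩
      · rintro ⟨j, hj, rfl⟩
        have := hg 0 (j + 1) (by omega) (by omega)
        exact ⟨by omega, j + 1, by omega, rfl⟩
    have htails : (range n).image (fun i => f (i + 1)) = (range n).image (fun i => g (i + 1)) := by
      rw [← htailf, ← htailg, him, heq0]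
    have hrec := ih (fun i => f (i + 1)) (fun i => g (i + 1))
      (fun i j hij hj => hf (i + 1) (j + 1) (by omega) (by omega))
      (fun i j hij hj => hg (i + 1) (j + 1) (by omega) (by omega)) htails
    rcases Nat.eq_zero_or_pos i with rfl | hpos
    · exact heq0
    · have h2 : f (i - 1 + 1) = g (i - 1 + 1) := hrec (i - 1) (by omega)
      have hi1 : i - 1 + 1 = i := by omega
      rwa [hi1] at h2

section Young2

variable (μ : YoungDiagram)

lemma young_final {w : ℕ} (hcard : μ.card = w) (hw : 0 < w) (hhook : IsHookSet (AA μ)) :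
    ∃ r, 1 ≤ r ∧ r ≤ w ∧ μ.rowLens = r :: List.replicate (w - r) 1 := by
  obtain ⟨M, g, hg, hM, heq⟩ := hhook
  rw [card_AA] at hg hM
  -- k ≥ 1
  have hk1 : 1 ≤ kk μ := by omega
  -- 0 ∉ AA μ
  have h0A : (0 : ℕ) ∉ AA μ := by
    intro hcon
    obtain ⟨i, hi, haa⟩ := mem_image.mp hcon
    rw [mem_range] at hi
    have := rowLen_pos_of_lt_kk μ hi
    unfold aa at haa
    omega
  -- g = 0
  have hg0 : g = 0 := by
    by_contra hgne
    apply h0A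
    rw [heq, card_AA]
    rw [mem_insert]
    right
    rw [mem_erase, mem_range]
    exact ⟨by omega, by omega⟩
  subst hg0
  rw [card_AA] at heq
  -- compare with model decreasing enumeration
  set b : ℕ → ℕ := fun i => if i = 0 then M else kk μ - i with hb
  have hbimg : (range (kk μ)).image b = insert M ((range (kk μ)).erase 0) := by
    ext x
    simp only [mem_image, mem_insert, mem_erase, mem_range]
    constructor
    · rintro ⟨i, hi, rfl⟩
      rcases Nat.eq_zero_or_pos i with rfl | hpos
      · left; simp [hb]
      · right
        simp only [hb]
        rw [if_neg (by omega)]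
        omega
    · rintro (rfl | ⟨hne, hlt⟩)
      · exact ⟨0, by omega, by simp [hb]⟩
      · refine ⟨kk μ - x, by omega, ?_⟩
        simp only [hb]
        rw [if_neg (by omega)]
        omega
  have hAb : (range (kk μ)).image (aa μ) = (range (kk μ)).image b := by
    show AA μ = _
    rw [heq, hbimg]
  have hbanti : ∀ i j, i < j → j < kk μ → b j < b i := by
    intro i j hij hj
    simp only [hb]
    rcases Nat.eq_zero_or_pos i with rfl | hpos
    · rw [if_pos rfl, if_neg (by omega)]
      omega
    · rw [if_neg (by omega), if_neg (by omega)]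
      omega
  have haaeq : ∀ i < kk μ, aa μ i = b i :=
    decr_enum_unique (kk μ) (aa μ) b
      (fun i j hij hj => aa_strictAnti μ hij hj) hbanti hAb
  -- row lengths
  have hrow0 : μ.rowLen 0 = M - (kk μ - 1) := by
    have := haaeq 0 hk1
    simp only [hb, if_pos rfl] at this
    unfold aa at this
    omega
  have hrowi : ∀ i, 1 ≤ i → i < kk μ → μ.rowLen i = 1 := by
    intro i h1 h2
    have := haaeq i h2
    simp only [hb] at this
    rw [if_neg (by omega)] at this
    unfold aa at this
    omega
  -- total count
  have hsum : μ.card = μ.rowLen 0 + (kk μ - 1) := by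
    rw [card_eq_sum_rowLens']
    obtain ⟨n, hn⟩ : ∃ n, kk μ = n + 1 := ⟨kk μ - 1, by omega⟩
    rw [hn, Finset.sum_range_succ']
    have he : ∀ i ∈ range n, μ.rowLen (i + 1) = 1 := by
      intro i hi
      rw [mem_range] at hi
      exact hrowi (i + 1) (by omega) (by omega)
    rw [sum_congr rfl he, Finset.sum_const, smul_eq_mul, mul_one, card_range]
    omega
  set r : ℕ := M - (kk μ - 1) with hr
  have hrpos : 1 ≤ r := by omega
  refine ⟨r, hrpos, by omega, ?_⟩
  -- rowLens computation
  have hlen : μ.rowLens = (List.range (kk μ)).map μ.rowLen := rfl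
  obtain ⟨n, hn⟩ : ∃ n, kk μ = n + 1 := ⟨kk μ - 1, by omega⟩
  rw [hlen, hn, List.range_succ_eq_map, List.map_cons]
  have hwr : w - r = n := by omega
  rw [hwr]
  congr 1
  rw [List.map_map]
  have hmem : ∀ x ∈ (List.range n).map (μ.rowLen ∘ Nat.succ), x = 1 := by
    intro x hx
    obtain ⟨i, hi, rfl⟩ := List.mem_map.mp hx
    rw [List.mem_range] at hi
    exact hrowi (i + 1) (by omega) (by omega)
  refine (List.eq_replicate_of_mem hmem).trans ?_
  simp

end Young2

end S15

/-- Let `w = 2^m` be a power of two and `(λ₀, λ₁)` a pair of partitions with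
`|λ₀| + |λ₁| = w`.  If `C(w,|λ₀|)·χ_{λ₀}(1)·χ_{λ₁}(1)` is odd and `|λ₀| > |λ₁|`,
then `λ₁ = ()` and `λ₀` is a hook partition `(r, 1^{w−r})` with `1 ≤ r ≤ w`. -/
theorem stmt15 (m w : ℕ) (hw : w = 2 ^ m)
    (μ₀ μ₁ : YoungDiagram) (hsum : μ₀.card + μ₁.card = w)
    (hodd : Odd (Nat.choose w μ₀.card * charDegree μ₀ * charDegree μ₁))
    (hgt : μ₀.card > μ₁.card) :
    μ₁ = ⊥ ∧ ∃ r, 1 ≤ r ∧ r ≤ w ∧ μ₀.rowLens = r :: List.replicate (w - r) 1 := by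
  classical
  rw [Nat.odd_mul, Nat.odd_mul] at hodd
  obtain ⟨⟨hoddch, hodd0⟩, _⟩ := hodd
  -- μ₀.card = w
  have hc0 : μ₀.card = w := by
    have := S15.odd_choose_pow2 (t := m) (hw ▸ hoddch) (by omega)
    omega
  -- μ₁ = ⊥
  have hbot : μ₁ = ⊥ := by
    have hc1 : μ₁.card = 0 := by omega
    have hcells : μ₁.cells = ∅ := Finset.card_eq_zero.mp hc1
    have hle : μ₁ ≤ ⊥ := by
      rw [← YoungDiagram.cells_subset_iff, hcells, YoungDiagram.cells_bot]
    exact le_bot_iff.mp hle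
  refine ⟨hbot, ?_⟩
  -- hook analysis for μ₀
  have hwpos : 0 < w := by rw [hw]; positivity
  set A := S15.AA μ₀ with hA
  have hnnA : S15.nn A = w := by rw [hA, S15.nn_AA, hc0]
  set H := ∏ c ∈ μ₀.cells, hookLength μ₀ c.1 c.2 with hH
  have hHP : H * S15.PP A = S15.FF A := S15.hook_prod_identity μ₀
  have hHpos : 0 < H := by
    have := S15.FF_pos A
    have := S15.PP_pos A
    by_contra hcon
    have : H = 0 := by omega
    rw [this, zero_mul] at hHP
    omega
  have hFdvd : S15.FF A ∣ (S15.nn A).factorial * S15.PP A := S15.FF_dvd A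
  have hHdvd : H ∣ w.factorial := by
    have h1 : H * S15.PP A ∣ w.factorial * S15.PP A := by
      rw [hHP, ← hnnA]
      exact hFdvd
    exact (Nat.mul_dvd_mul_iff_right (S15.PP_pos A)).mp h1
  -- oddness of degree
  have hdeg : charDegree μ₀ = w.factorial / H := by
    unfold charDegree
    rw [hc0, hH]
  rw [hdeg] at hodd0
  have hfacteq : w.factorial = H * (w.factorial / H) := (Nat.mul_div_cancel' hHdvd).symm
  have hqne : w.factorial / H ≠ 0 := by
    intro hcon
    rw [hcon, mul_zero] at hfacteq
    exact Nat.factorial_ne_zero w hfacteq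
  have hv2fact : S15.v2 w.factorial = S15.v2 H := by
    conv_lhs => rw [hfacteq]
    rw [S15.v2_mul (by omega) hqne, S15.v2_odd hodd0]
    omega
  have hpre : S15.v2 ((S15.nn A).factorial * S15.PP A) = S15.v2 (S15.FF A) := by
    rw [hnnA, ← hHP,
      S15.v2_mul (Nat.factorial_ne_zero w) (S15.PP_ne A),
      S15.v2_mul (by omega) (S15.PP_ne A), hv2fact]
  have hhook : S15.IsHookSet A := S15.main7 m A (by rw [hnnA, hw]) hpre
  exact S15.young_final μ₀ hc0 hwpos hhook
end

section
/- Let w = 2^m with m ≥ 1. The degree χ_λ(1) of the irreducible character of S_w labeled by a partition λ of w is odd if and only if λ is a hook partition (r, 1^{w−r}) for some 1 ≤ r ≤ w. -/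
open Finset

namespace HookAux
open YoungDiagram

/-- beta numbers -/
def ell (μ : YoungDiagram) (i : ℕ) : ℕ := μ.rowLen i + (μ.colLen 0 - 1 - i)

def Lset (μ : YoungDiagram) : Finset ℕ := (range (μ.colLen 0)).image (ell μ)

lemma rowLen_pos {μ : YoungDiagram} {i : ℕ} (h : i < μ.colLen 0) : 1 ≤ μ.rowLen i := by
  have : (i, 0) ∈ μ := mem_iff_lt_colLen.mpr h
  exact (by simpa using mem_iff_lt_rowLen.mp this : 0 < _)

lemma rowLen_zero {μ : YoungDiagram} {i : ℕ} (h : μ.colLen 0 ≤ i) : μ.rowLen i = 0 := by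
  by_contra hc
  have := mem_iff_lt_colLen.mp (mem_iff_lt_rowLen.mpr (Nat.pos_of_ne_zero hc) : (i, 0) ∈ μ); omega

lemma ell_strictAnti {μ : YoungDiagram} {i t : ℕ} (hit : i < t) (ht : t < μ.colLen 0) :
    ell μ t < ell μ i := by
  have h1 : μ.rowLen t ≤ μ.rowLen i := μ.rowLen_anti i t hit.le
  have h2 : 1 ≤ μ.rowLen t := rowLen_pos ht
  unfold ell; omega

lemma ell_injOn {μ : YoungDiagram} : Set.InjOn (ell μ) (range (μ.colLen 0)) := by
  intro a ha b hb hab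
  simp only [coe_range, Set.mem_Iio] at ha hb
  rcases lt_trichotomy a b with h | h | h
  · exact absurd hab (ell_strictAnti h hb).ne'
  · exact h
  · exact absurd hab (ell_strictAnti h ha).ne

lemma cells_decomp (μ : YoungDiagram) :
    μ.cells = (range (μ.colLen 0)).biUnion
      (fun i => (range (μ.rowLen i)).image (fun j => (i, j))) := by
  ext ⟨i, j⟩
  simp only [mem_cells, mem_biUnion, mem_range, mem_image]
  constructor
  · intro h
    have hj := mem_iff_lt_rowLen.mp h
    have hi : i < μ.colLen 0 := mem_iff_lt_colLen.mp (μ.up_left_mem le_rfl (Nat.zero_le j) h)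
    exact ⟨i, hi, j, hj, rfl⟩
  · rintro ⟨a, _, b, hb, h⟩
    obtain ⟨rfl, rfl⟩ := Prod.mk.injEq .. ▸ h
    exact mem_iff_lt_rowLen.mpr (by omega)

lemma hook_facts {μ : YoungDiagram} {i j : ℕ} (h : (i, j) ∈ μ) :
    hookLength μ i j + 1 = (μ.rowLen i - j) + (μ.colLen j - i) ∧
    j < μ.rowLen i ∧ i < μ.colLen j := by
  have h1 : j < μ.rowLen i := mem_iff_lt_rowLen.mp h
  have h2 : i < μ.colLen j := mem_iff_lt_colLen.mp h
  refine ⟨?_, h1, h2⟩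
  unfold hookLength; omega

lemma hook_pos {μ : YoungDiagram} {i j : ℕ} (h : (i, j) ∈ μ) : 1 ≤ hookLength μ i j := by
  obtain ⟨h0, h1, h2⟩ := hook_facts h; omega

lemma hook_le_ell {μ : YoungDiagram} {i j : ℕ} (h : (i, j) ∈ μ) :
    hookLength μ i j + j ≤ ell μ i := by
  obtain ⟨h0, h1, h2⟩ := hook_facts h
  have h3 : μ.colLen j ≤ μ.colLen 0 := μ.colLen_anti 0 j (Nat.zero_le j)
  unfold ell; omega

lemma hook_strictAnti {μ : YoungDiagram} {i j1 j2 : ℕ} (hj : j1 < j2) (h : (i, j2) ∈ μ) :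
    hookLength μ i j2 < hookLength μ i j1 := by
  obtain ⟨h0, h1, h2⟩ := hook_facts h
  obtain ⟨h0', h1', h2'⟩ := hook_facts (μ.up_left_mem le_rfl hj.le h)
  have h3 : μ.colLen j2 ≤ μ.colLen j1 := μ.colLen_anti j1 j2 hj.le
  omega

lemma bnum_not_mem_Lset {μ : YoungDiagram} {i j : ℕ} (h : (i, j) ∈ μ) :
    ell μ i - hookLength μ i j ∉ Lset μ := by
  obtain ⟨h0, h1, h2⟩ := hook_facts h
  have hC : μ.colLen j ≤ μ.colLen 0 := μ.colLen_anti 0 j (Nat.zero_le j)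
  have hik : i < μ.colLen 0 := by omega
  intro hmem
  simp only [Lset, mem_image, mem_range] at hmem
  obtain ⟨t, htk, ht⟩ := hmem
  have hle := hook_le_ell h
  rcases Nat.lt_or_ge i t with hit | hti
  · -- the contradiction case
    have hrt : μ.rowLen t ≤ μ.rowLen i := μ.rowLen_anti i t hit.le
    unfold ell at ht hle
    rcases Nat.lt_or_ge j (μ.rowLen t) with hm | hm
    · have : t < μ.colLen j := mem_iff_lt_colLen.mp (mem_iff_lt_rowLen.mpr hm : (t, j) ∈ μ)
      omega
    · have : μ.colLen j ≤ t := by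
        by_contra hc
        have : (t, j) ∈ μ := mem_iff_lt_colLen.mpr (by omega)
        have := mem_iff_lt_rowLen.mp this
        omega
      omega
  · -- t ≤ i: then ell t ≥ ell i, but ell t = ell i - hook < ell i
    rcases Nat.eq_or_lt_of_le hti with rfl | hlt
    · omega
    · have := ell_strictAnti hlt hik
      omega

lemma bnum_injOn {μ : YoungDiagram} {i : ℕ} :
    Set.InjOn (fun j => ell μ i - hookLength μ i j) (range (μ.rowLen i)) := by
  intro a ha b hb hab
  have hab : ell μ i - hookLength μ i a = ell μ i - hookLength μ i b := hab
  simp only [coe_range, Set.mem_Iio] at ha hb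
  have hma : (i, a) ∈ μ := mem_iff_lt_rowLen.mpr ha
  have hmb : (i, b) ∈ μ := mem_iff_lt_rowLen.mpr hb
  have h1 := hook_le_ell hma
  have h2 := hook_le_ell hmb
  rcases lt_trichotomy a b with h | h | h
  · have := hook_strictAnti h hmb; omega
  · exact h
  · have := hook_strictAnti h hma; omega

lemma Lset_inter_range {μ : YoungDiagram} {i : ℕ} (hi : i < μ.colLen 0) :
    (range (ell μ i)).filter (· ∈ Lset μ) = (Ioo i (μ.colLen 0)).image (ell μ) := by
  ext b
  simp only [mem_filter, mem_range, mem_image, mem_Ioo, Lset]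
  constructor
  · rintro ⟨hb, t, htk, rfl⟩
    refine ⟨t, ⟨?_, htk⟩, rfl⟩
    by_contra hc
    rcases Nat.eq_or_lt_of_le (Nat.le_of_not_lt hc) with rfl | hlt
    · omega
    · have := ell_strictAnti hlt hi; omega
  · rintro ⟨t, ⟨hit, htk⟩, rfl⟩
    exact ⟨ell_strictAnti hit htk, t, by simpa using htk, rfl⟩

lemma card_Lset_inter_range {μ : YoungDiagram} {i : ℕ} (hi : i < μ.colLen 0) :
    ((range (ell μ i)).filter (· ∈ Lset μ)).card = μ.colLen 0 - 1 - i := by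
  rw [Lset_inter_range hi, Finset.card_image_of_injOn, Nat.card_Ioo]
  · omega
  intro a ha b hb hab
  simp only [coe_Ioo, Set.mem_Ioo] at ha hb
  exact ell_injOn (by simp [ha.2]) (by simp [hb.2]) hab

lemma rowA {μ : YoungDiagram} {i : ℕ} (hi : i < μ.colLen 0) :
    (range (μ.rowLen i)).image (fun j => ell μ i - hookLength μ i j)
      = (range (ell μ i)).filter (· ∉ Lset μ) := by
  apply Finset.eq_of_subset_of_card_le
  · intro b hb
    simp only [mem_image, mem_range] at hb
    obtain ⟨j, hj, rfl⟩ := hb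
    have hm : (i, j) ∈ μ := mem_iff_lt_rowLen.mpr hj
    have h1 := hook_le_ell hm
    have h2 := hook_pos hm
    simp only [mem_filter, mem_range]
    exact ⟨by omega, bnum_not_mem_Lset hm⟩
  · have hc1 : ((range (ell μ i)).filter (· ∉ Lset μ)).card
        = ell μ i - (μ.colLen 0 - 1 - i) := by
      have := Finset.card_filter_add_card_filter_not
        (s := range (ell μ i)) (p := (· ∈ Lset μ))
      rw [card_Lset_inter_range hi] at this
      simp only [card_range] at this
      omega
    rw [hc1, Finset.card_image_of_injOn bnum_injOn, card_range]
    unfold ell; omega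

/-- counting multiples: `#{b < a : q ∣ a - b} = a / q` -/
lemma count_range_dvd_sub (a : ℕ) {q : ℕ} (hq : 1 ≤ q) :
    ((range a).filter (fun b => q ∣ a - b)).card = a / q := by
  rw [← Nat.Ioc_filter_dvd_card_eq_div a q]
  apply Finset.card_bij' (fun b _ => a - b) (fun v _ => a - v)
  · intro b hb
    simp only [mem_filter, mem_range] at hb
    simp only [mem_filter, mem_Ioc]
    exact ⟨⟨by omega, by omega⟩, hb.2⟩
  · intro v hv
    simp only [mem_filter, mem_Ioc] at hv
    simp only [mem_filter, mem_range]
    constructor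
    · omega
    · have : a - (a - v) = v := by omega
      rw [this]; exact hv.2
  · intro b hb; simp only [mem_filter, mem_range] at hb; omega
  · intro v hv; simp only [mem_filter, mem_Ioc] at hv; omega

/-- counting multiples: `#{b ∈ [1,a) : q ∣ a - b} = (a-1) / q` -/
lemma count_Ico_dvd_sub (a : ℕ) {q : ℕ} (hq : 1 ≤ q) :
    ((Ico 1 a).filter (fun b => q ∣ a - b)).card = (a - 1) / q := by
  rw [← Nat.Ioc_filter_dvd_card_eq_div (a-1) q]
  apply Finset.card_bij' (fun b _ => a - b) (fun v _ => a - v)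
  · intro b hb
    simp only [mem_filter, mem_Ico] at hb
    simp only [mem_filter, mem_Ioc]
    exact ⟨⟨by omega, by omega⟩, hb.2⟩
  · intro v hv
    simp only [mem_filter, mem_Ioc] at hv
    simp only [mem_filter, mem_Ico]
    constructor
    · omega
    · have : a - (a - v) = v := by omega
      rw [this]; exact hv.2
  · intro b hb; simp only [mem_filter, mem_Ico] at hb; omega
  · intro v hv; simp only [mem_filter, mem_Ioc] at hv; omega

def crow (μ : YoungDiagram) (q i : ℕ) : ℕ :=
  ((range (μ.rowLen i)).filter (fun j => q ∣ hookLength μ i j)).card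

def dq (μ : YoungDiagram) (q i : ℕ) : ℕ :=
  ((Ioo i (μ.colLen 0)).filter (fun t => ell μ t % q = ell μ i % q)).card

def Nq (μ : YoungDiagram) (q : ℕ) : ℕ :=
  (μ.cells.filter (fun c => q ∣ hookLength μ c.1 c.2)).card

lemma row_count {μ : YoungDiagram} {q i : ℕ} (hq : 1 ≤ q) (hi : i < μ.colLen 0) :
    crow μ q i + dq μ q i = ell μ i / q := by
  classical
  set A := (range (ell μ i)).filter (fun b => q ∣ ell μ i - b) with hA
  have hsplit := Finset.card_filter_add_card_filter_not
    (s := A) (p := (· ∈ Lset μ))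
  have hcardA : A.card = ell μ i / q := count_range_dvd_sub _ hq
  -- the ∉ part is crow
  have h2 : A.filter (· ∉ Lset μ)
      = ((range (μ.rowLen i)).image (fun j => ell μ i - hookLength μ i j)).filter
          (fun b => q ∣ ell μ i - b) := by
    rw [rowA hi]
    ext b
    simp only [hA, mem_filter, mem_range]
    tauto
  have h2' : (A.filter (· ∉ Lset μ)).card = crow μ q i := by
    rw [h2, Finset.filter_image, Finset.card_image_of_injOn
      (bnum_injOn.mono (by intro x hx; simpa using (Finset.mem_filter.mp hx).1))]
    unfold crow
    congr 1
    apply Finset.filter_congr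
    intro j hj
    simp only [mem_range] at hj
    have hm : (i, j) ∈ μ := mem_iff_lt_rowLen.mpr hj
    have hle := hook_le_ell hm
    have : ell μ i - (ell μ i - hookLength μ i j) = hookLength μ i j := by omega
    simp [this]
  -- the ∈ part is dq
  have h3 : A.filter (· ∈ Lset μ)
      = ((Ioo i (μ.colLen 0)).filter (fun t => ell μ t % q = ell μ i % q)).image (ell μ) := by
    have : A.filter (· ∈ Lset μ)
        = ((range (ell μ i)).filter (· ∈ Lset μ)).filter (fun b => q ∣ ell μ i - b) := by
      ext b; simp only [hA, mem_filter, mem_range]; tauto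
    rw [this, Lset_inter_range hi, Finset.filter_image]
    congr 1
    apply Finset.filter_congr
    intro t ht
    simp only [mem_Ioo] at ht
    have hlt : ell μ t ≤ ell μ i := (ell_strictAnti ht.1 ht.2).le
    have := Nat.modEq_iff_dvd' (n := q) hlt
    simp only [Nat.ModEq] at this
    simp [← this]
  have h3' : (A.filter (· ∈ Lset μ)).card = dq μ q i := by
    rw [h3, Finset.card_image_of_injOn]
    · rfl
    intro a ha b hb hab
    simp only [coe_filter, Set.mem_setOf_eq, mem_Ioo] at ha hb
    exact ell_injOn (by simp [ha.1.2]) (by simp [hb.1.2]) hab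
  omega

/-- any finset of naturals has sum at least 0+1+...+(card-1) -/
lemma triangle_le_sum_finset (S : Finset ℕ) : ∑ j ∈ range S.card, j ≤ ∑ x ∈ S, x := by
  generalize hn : S.card = n
  induction n generalizing S with
  | zero => simp
  | succ n ih =>
    have hne : S.Nonempty := by
      rw [← Finset.card_pos, hn]; omega
    set M := S.max' hne with hM
    have hMS : M ∈ S := S.max'_mem hne
    have hcard : S.card ≤ M + 1 := by
      have : S ⊆ range (M + 1) := by
        intro x hx
        simp only [mem_range]
        exact Nat.lt_succ_of_le (S.le_max' x hx)
      simpa using Finset.card_le_card this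
    have herase : (S.erase M).card = n := by
      rw [Finset.card_erase_of_mem hMS, hn]; rfl
    have hsum : ∑ x ∈ S, x = M + ∑ x ∈ S.erase M, x :=
      (Finset.add_sum_erase S _ hMS).symm
    rw [Finset.sum_range_succ, hsum]
    have := ih (S.erase M) herase
    omega

lemma triangle_le_sum_injOn {α : Type*} (s : Finset α) (f : α → ℕ)
    (hf : Set.InjOn f s) : ∑ j ∈ range s.card, j ≤ ∑ x ∈ s, f x := by
  have h1 : ∑ b ∈ s.image f, id b = ∑ x ∈ s, id (f x) :=
    Finset.sum_image (fun a ha b hb => hf ha hb)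
  simp only [id] at h1
  rw [← h1, ← Finset.card_image_of_injOn hf]
  exact triangle_le_sum_finset _

/-- key inequality via the abacus: the triangular number is at most
`Σ (q * dq i + ell i % q)`. -/
lemma triangle_le_psi (μ : YoungDiagram) {q : ℕ} (hq : 1 ≤ q) :
    ∑ j ∈ range (μ.colLen 0), j
      ≤ ∑ i ∈ range (μ.colLen 0), (q * dq μ q i + ell μ i % q) := by
  have key := triangle_le_sum_injOn (range (μ.colLen 0))
    (fun i => q * dq μ q i + ell μ i % q) ?inj
  · simpa using key
  case inj =>
  have key : ∀ a b : ℕ, a < b → b < μ.colLen 0 →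
      q * dq μ q a + ell μ a % q = q * dq μ q b + ell μ b % q → False := by
    intro a b hlt hb hab
    have hmod : ell μ a % q = ell μ b % q := by
      have h1 : (q * dq μ q a + ell μ a % q) % q = ell μ a % q := by
        rw [Nat.mul_add_mod, Nat.mod_mod_of_dvd _ dvd_rfl]
      have h2 : (q * dq μ q b + ell μ b % q) % q = ell μ b % q := by
        rw [Nat.mul_add_mod, Nat.mod_mod_of_dvd _ dvd_rfl]
      rw [← h1, ← h2, hab]
    have hdq : dq μ q a = dq μ q b :=
      Nat.eq_of_mul_eq_mul_left (show 0 < q by omega) (by omega)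
    have hsub : insert b ((Ioo b (μ.colLen 0)).filter (fun t => ell μ t % q = ell μ b % q))
        ⊆ (Ioo a (μ.colLen 0)).filter (fun t => ell μ t % q = ell μ a % q) := by
      intro t ht
      simp only [mem_insert, mem_filter, mem_Ioo] at ht ⊢
      rcases ht with rfl | ⟨⟨h1, h2⟩, h3⟩
      · exact ⟨⟨hlt, hb⟩, hmod.symm⟩
      · exact ⟨⟨by omega, h2⟩, by omega⟩
    have hcard2 := Finset.card_le_card hsub
    rw [Finset.card_insert_of_notMem (by simp)] at hcard2
    unfold dq at hdq
    omega
  intro a ha b hb hab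
  have hab : q * dq μ q a + ell μ a % q = q * dq μ q b + ell μ b % q := hab
  simp only [coe_range, Set.mem_Iio] at ha hb
  rcases lt_trichotomy a b with h | h | h
  · exact absurd hab (fun he => key a b h hb he)
  · exact h
  · exact absurd hab.symm (fun he => key b a h ha he)

lemma card_eq_sum_rowLen (μ : YoungDiagram) :
    μ.card = ∑ i ∈ range (μ.colLen 0), μ.rowLen i := by
  rw [YoungDiagram.card, cells_decomp]
  rw [Finset.card_biUnion]
  · apply Finset.sum_congr rfl
    intro i _
    rw [Finset.card_image_of_injective _ (fun a b h => by simpa using h), card_range]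
  · intro a _ b _ hab
    simp only [Finset.disjoint_left]
    intro c hc hcb
    simp only [mem_image, mem_range] at hc hcb
    obtain ⟨x, _, rfl⟩ := hc
    obtain ⟨y, _, h⟩ := hcb
    exact hab ((Prod.ext_iff.mp h).1).symm

lemma Nq_eq_sum_crow (μ : YoungDiagram) (q : ℕ) :
    Nq μ q = ∑ i ∈ range (μ.colLen 0), crow μ q i := by
  unfold Nq
  rw [cells_decomp, Finset.filter_biUnion, Finset.card_biUnion]
  · apply Finset.sum_congr rfl
    intro i _
    rw [Finset.filter_image, Finset.card_image_of_injective _ (fun a b h => by simpa using h)]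
    rfl
  · intro a _ b _ hab
    simp only [Finset.disjoint_left]
    intro c hc hcb
    simp only [Finset.filter_image, mem_image, mem_filter, mem_range] at hc hcb
    obtain ⟨x, _, rfl⟩ := hc
    obtain ⟨y, _, h⟩ := hcb
    exact hab ((Prod.ext_iff.mp h).1).symm

/-- The crux: `q * #{cells with hook length divisible by q} ≤ |μ|`. -/
lemma crux (μ : YoungDiagram) {q : ℕ} (hq : 1 ≤ q) : q * Nq μ q ≤ μ.card := by
  set k := μ.colLen 0 with hk
  have h1 : ∑ i ∈ range k, ell μ i = μ.card + ∑ j ∈ range k, j := by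
    have e1 : ∑ i ∈ range k, ell μ i
        = ∑ i ∈ range k, μ.rowLen i + ∑ i ∈ range k, (k - 1 - i) := by
      rw [← Finset.sum_add_distrib]; rfl
    have e2 : ∑ i ∈ range k, (k - 1 - i) = ∑ j ∈ range k, j :=
      Finset.sum_range_reflect (fun j => j) k
    rw [e1, e2, card_eq_sum_rowLen]
  have h2 : ∀ i ∈ range k, ell μ i = q * (crow μ q i) + (q * dq μ q i + ell μ i % q) := by
    intro i hi
    simp only [mem_range] at hi
    have := row_count (μ := μ) hq (i := i) hi
    have hdm := Nat.div_add_mod (ell μ i) q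
    have : q * (crow μ q i + dq μ q i) = q * (ell μ i / q) := by rw [this]
    rw [Nat.mul_add] at this
    omega
  have h2' : ∑ i ∈ range k, ell μ i
      = q * Nq μ q + (q * ∑ i ∈ range k, dq μ q i + ∑ i ∈ range k, ell μ i % q) := by
    rw [Finset.sum_congr rfl h2, Finset.sum_add_distrib, Finset.sum_add_distrib,
      ← Finset.mul_sum, ← Finset.mul_sum, Nq_eq_sum_crow]
  have h3 : ∑ j ∈ range k, j
      ≤ q * ∑ i ∈ range k, dq μ q i + ∑ i ∈ range k, ell μ i % q := by
    have := triangle_le_psi μ hq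
    rw [Finset.sum_add_distrib, ← Finset.mul_sum] at this
    exact this
  set X := q * Nq μ q with hX
  set Y := q * ∑ i ∈ range k, dq μ q i with hY
  omega

def Pprod (μ : YoungDiagram) : ℕ := ∏ c ∈ μ.cells, hookLength μ c.1 c.2

/-- first row ∪ first column -/
def hookSet (μ : YoungDiagram) : Finset (ℕ × ℕ) :=
  (range (μ.rowLen 0)).image (fun j => (0, j)) ∪ (range (μ.colLen 0)).image (fun i => (i, 0))

lemma hookSet_subset (μ : YoungDiagram) : hookSet μ ⊆ μ.cells := by
  intro c hc
  simp only [hookSet, mem_union, mem_image, mem_range] at hc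
  rw [YoungDiagram.mem_cells]
  rcases hc with ⟨j, hj, rfl⟩ | ⟨i, hi, rfl⟩
  · exact mem_iff_lt_rowLen.mpr hj
  · exact mem_iff_lt_colLen.mpr hi

lemma hookSet_card {μ : YoungDiagram} (hr : 1 ≤ μ.rowLen 0) (hc : 1 ≤ μ.colLen 0) :
    (hookSet μ).card + 1 = μ.rowLen 0 + μ.colLen 0 := by
  unfold hookSet
  have hA : ((range (μ.rowLen 0)).image (fun j => (0, j))).card = μ.rowLen 0 := by
    rw [Finset.card_image_of_injective _ (fun a b h => (Prod.ext_iff.mp h).2), card_range]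
  have hB : ((range (μ.colLen 0)).image (fun i => (i, 0))).card = μ.colLen 0 := by
    rw [Finset.card_image_of_injective _ (fun a b h => (Prod.ext_iff.mp h).1), card_range]
  have hI : (range (μ.rowLen 0)).image (fun j => ((0 : ℕ), j))
      ∩ (range (μ.colLen 0)).image (fun i => (i, (0 : ℕ))) = {(0, 0)} := by
    ext c
    simp only [mem_inter, mem_image, mem_range, mem_singleton]
    constructor
    · rintro ⟨⟨j, hj, rfl⟩, ⟨i, hi, he⟩⟩
      have := Prod.ext_iff.mp he
      simp only at this
      ext <;> simp [this.1, this.2]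
    · rintro rfl
      exact ⟨⟨0, by omega, rfl⟩, ⟨0, by omega, rfl⟩⟩
  have hkey := Finset.card_union_add_card_inter
    ((range (μ.rowLen 0)).image (fun j => ((0:ℕ), j)))
    ((range (μ.colLen 0)).image (fun i => (i, (0:ℕ))))
  rw [hA, hB, hI] at hkey
  simpa using hkey

lemma hook_le_first {μ : YoungDiagram} {i j : ℕ} (h : (i, j) ∈ μ) :
    hookLength μ i j + 1 ≤ μ.rowLen 0 + μ.colLen 0 := by
  obtain ⟨h0, h1, h2⟩ := hook_facts h
  have h3 : μ.rowLen i ≤ μ.rowLen 0 := μ.rowLen_anti 0 i (Nat.zero_le i)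
  have h4 : μ.colLen j ≤ μ.colLen 0 := μ.colLen_anti 0 j (Nat.zero_le j)
  omega

lemma hook_le_card {μ : YoungDiagram} {i j : ℕ} (h : (i, j) ∈ μ) :
    hookLength μ i j ≤ μ.card := by
  have hr : 1 ≤ μ.rowLen 0 := by
    have := μ.up_left_mem (Nat.zero_le i) (Nat.zero_le j) h
    exact (by simpa using mem_iff_lt_rowLen.mp this : 0 < _)
  have hc : 1 ≤ μ.colLen 0 := by
    have := μ.up_left_mem (Nat.zero_le i) (Nat.zero_le j) h
    exact Nat.one_le_iff_ne_zero.mpr (by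
      intro h0
      have := mem_iff_lt_colLen.mp this
      omega)
  have h1 := hook_le_first h
  have h2 := hookSet_card hr hc
  have h3 := Finset.card_le_card (hookSet_subset μ)
  have : (μ.cells).card = μ.card := rfl
  omega

lemma hook_pos' {μ : YoungDiagram} {c : ℕ × ℕ} (h : c ∈ μ.cells) :
    1 ≤ hookLength μ c.1 c.2 := by
  have : (c.1, c.2) ∈ μ := by rwa [Prod.mk.eta, ← YoungDiagram.mem_cells]
  exact hook_pos this

lemma Pprod_pos (μ : YoungDiagram) : 1 ≤ Pprod μ :=
  Finset.one_le_prod' (fun c hc => hook_pos' hc)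

lemma factorization_Pprod (μ : YoungDiagram) {p : ℕ} (hp : p.Prime) {B : ℕ}
    (hB : μ.card < p ^ B) :
    (Pprod μ).factorization p = ∑ j ∈ Ico 1 B, Nq μ (p ^ j) := by
  classical
  have hcell : ∀ c ∈ μ.cells, hookLength μ c.1 c.2 ≠ 0 := fun c hc => by
    have := hook_pos' hc; omega
  have hfac : (Pprod μ).factorization p
      = ∑ c ∈ μ.cells, (hookLength μ c.1 c.2).factorization p := by
    unfold Pprod
    rw [Nat.factorization_prod hcell]
    simp [Finset.sum_apply']
  rw [hfac]
  have hhc : ∀ c ∈ μ.cells, (hookLength μ c.1 c.2).factorization p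
      = ((Ico 1 B).filter (fun j => p ^ j ∣ hookLength μ c.1 c.2)).card := by
    intro c hc
    set h := hookLength μ c.1 c.2 with hh
    have h1 : 1 ≤ h := hook_pos' hc
    have hle : h ≤ μ.card := by
      have : (c.1, c.2) ∈ μ := by rwa [Prod.mk.eta, ← YoungDiagram.mem_cells]
      exact hook_le_card this
    set ν := h.factorization p with hν
    have hνB : ν < B := by
      have hd : p ^ ν ∣ h := Nat.ordProj_dvd h p
      have : p ^ ν ≤ h := Nat.le_of_dvd (by omega) hd
      have : p ^ ν < p ^ B := by omega
      exact (Nat.pow_lt_pow_iff_right hp.one_lt).mp this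
    have : (Ico 1 B).filter (fun j => p ^ j ∣ h) = Ico 1 (ν + 1) := by
      ext j
      simp only [mem_filter, mem_Ico]
      rw [hp.pow_dvd_iff_le_factorization (by omega)]
      omega
    rw [this, Nat.card_Ico]
    omega
  rw [Finset.sum_congr rfl hhc]
  have : ∀ c ∈ μ.cells, ((Ico 1 B).filter (fun j => p ^ j ∣ hookLength μ c.1 c.2)).card
      = ∑ j ∈ Ico 1 B, if p ^ j ∣ hookLength μ c.1 c.2 then 1 else 0 := by
    intro c _
    rw [Finset.card_filter]
  rw [Finset.sum_congr rfl this, Finset.sum_comm]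
  apply Finset.sum_congr rfl
  intro j _
  rw [Nq, Finset.card_filter]

lemma Nq_le_div (μ : YoungDiagram) {q : ℕ} (hq : 1 ≤ q) : Nq μ q ≤ μ.card / q :=
  (Nat.le_div_iff_mul_le (by omega)).mpr (by rw [mul_comm]; exact crux μ hq)

lemma factorization_factorial' {p : ℕ} (hp : p.Prime) {n B : ℕ} (hB : n < B) :
    (Nat.factorial n).factorization p = ∑ j ∈ Ico 1 B, n / p ^ j := by
  haveI : Fact p.Prime := ⟨hp⟩
  rw [Nat.factorization_def _ hp]
  exact padicValNat_factorial (lt_of_le_of_lt (Nat.log_le_self p n) hB)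

lemma Pprod_dvd_factorial (μ : YoungDiagram) : Pprod μ ∣ Nat.factorial μ.card := by
  rw [← Nat.factorization_le_iff_dvd (by have := Pprod_pos μ; omega) (Nat.factorial_ne_zero _)]
  rw [Finsupp.le_def]
  intro p
  by_cases hp : p.Prime
  · set B := μ.card + 1 with hB
    have hcard : μ.card < p ^ B := by
      calc μ.card < 2 ^ μ.card := Nat.lt_two_pow_self
        _ ≤ p ^ μ.card := Nat.pow_le_pow_left hp.two_le _
        _ ≤ p ^ B := Nat.pow_le_pow_right hp.pos (by omega)
    rw [factorization_Pprod μ hp hcard, factorization_factorial' hp (show μ.card < B by omega)]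
    apply Finset.sum_le_sum
    intro j hj
    exact Nq_le_div μ (Nat.one_le_pow _ _ hp.pos)
  · rw [Nat.factorization_eq_zero_of_not_prime _ hp]
    exact Nat.zero_le _

lemma sum_Ico_two_pow (m : ℕ) : ∑ j ∈ Ico 1 (m + 1), 2 ^ (m - j) = 2 ^ m - 1 := by
  induction m with
  | zero => simp
  | succ m ih =>
    rw [Finset.sum_Ico_succ_top (by omega)]
    have he : ∑ j ∈ Ico 1 (m + 1), 2 ^ (m + 1 - j) = ∑ j ∈ Ico 1 (m + 1), 2 * 2 ^ (m - j) := by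
      apply Finset.sum_congr rfl
      intro j hj
      simp only [mem_Ico] at hj
      have : m + 1 - j = (m - j) + 1 := by omega
      rw [this, pow_succ]; ring
    rw [he, ← Finset.mul_sum, ih]
    have h1 : 1 ≤ 2 ^ m := Nat.one_le_two_pow
    have h2 : (2:ℕ) ^ (m + 1) = 2 * 2 ^ m := by rw [pow_succ]; ring
    have h3 : m + 1 - (m + 1) = 0 := by omega
    rw [h3, pow_zero]
    omega

/-- central parity criterion -/
lemma odd_iff_sum_Nq {μ : YoungDiagram} {m : ℕ} (hμ : μ.card = 2 ^ m) :
    Odd (charDegree μ) ↔ ∑ j ∈ Ico 1 (m + 1), Nq μ (2 ^ j) = 2 ^ m - 1 := by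
  have hP := Pprod_pos μ
  have hdvd := Pprod_dvd_factorial μ
  have hfac2 : (Nat.factorial μ.card).factorization 2 = 2 ^ m - 1 := by
    rw [factorization_factorial' Nat.prime_two (show μ.card < μ.card + 1 by omega), hμ]
    have : ∀ j ∈ Ico 1 (2 ^ m + 1), 2 ^ m / 2 ^ j = if j ≤ m then 2 ^ (m - j) else 0 := by
      intro j hj
      by_cases h : j ≤ m
      · rw [if_pos h, Nat.pow_div h (by omega)]
      · rw [if_neg h]
        apply Nat.div_eq_of_lt
        exact Nat.pow_lt_pow_right (by omega) (by omega)
    rw [Finset.sum_congr rfl this, Finset.sum_ite, Finset.sum_const_zero, add_zero]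
    have hfilter : (Ico 1 (2 ^ m + 1)).filter (fun j => j ≤ m) = Ico 1 (m + 1) := by
      ext j
      simp only [mem_filter, mem_Ico]
      have : m < 2 ^ m := Nat.lt_two_pow_self
      omega
    rw [hfilter]
    exact sum_Ico_two_pow m
  have hfacP : (Pprod μ).factorization 2 = ∑ j ∈ Ico 1 (m + 1), Nq μ (2 ^ j) := by
    apply factorization_Pprod μ Nat.prime_two
    rw [hμ]
    exact Nat.pow_lt_pow_right (by omega) (by omega)
  have hle : ∑ j ∈ Ico 1 (m + 1), Nq μ (2 ^ j) ≤ 2 ^ m - 1 := by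
    rw [← hfac2, ← hfacP]
    exact (Nat.factorization_le_iff_dvd (by omega) (Nat.factorial_ne_zero _)).mpr hdvd 2
  have hX : charDegree μ = Nat.factorial μ.card / Pprod μ := rfl
  have hXpos : 0 < charDegree μ := by
    rw [hX]
    exact Nat.div_pos (Nat.le_of_dvd (Nat.factorial_pos _) hdvd) (by omega)
  have hdiv : (charDegree μ).factorization 2
      = (Nat.factorial μ.card).factorization 2 - (Pprod μ).factorization 2 := by
    rw [hX, Nat.factorization_div hdvd]
    simp
  rw [Nat.odd_iff, ← Nat.two_dvd_ne_zero]
  rw [Nat.Prime.dvd_iff_one_le_factorization Nat.prime_two (by omega)]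
  rw [hdiv, hfac2, hfacP]
  omega

lemma div_add_div_pow {a b d D : ℕ} (hd : 1 ≤ d) (hD : 1 ≤ D) (hab : a + b + 1 = d * D) :
    a / d + b / d + 1 = D := by
  have h1 := Nat.div_add_mod a d
  have h2 := Nat.div_add_mod b d
  have hma : a % d < d := Nat.mod_lt _ (by omega)
  have hmb : b % d < d := Nat.mod_lt _ (by omega)
  have hmod : (a % d + b % d + 1) % d = 0 := by
    have e : a % d + b % d + 1 ≡ a + b + 1 [MOD d] :=
      ((Nat.mod_modEq a d).add (Nat.mod_modEq b d)).add_right 1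
    have e2 : (a % d + b % d + 1) % d = (a + b + 1) % d := e
    rw [e2, hab, Nat.mul_mod_right]
  have hdvd : d ∣ a % d + b % d + 1 := Nat.dvd_of_mod_eq_zero hmod
  have hle : d ≤ a % d + b % d + 1 := Nat.le_of_dvd (by omega) hdvd
  have hq1 : (a % d + b % d + 1) / d = 1 := Nat.div_eq_of_lt_le (by omega) (by omega)
  have hs := Nat.div_add_mod (a % d + b % d + 1) d
  rw [hq1, hmod] at hs
  -- so a % d + b % d + 1 = d
  have hmsum : a % d + b % d + 1 = d := by omega
  -- now d * (a/d + b/d + 1) = d * D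
  have key : d * (a / d + b / d + 1) = d * D := by
    have expand : d * (a / d + b / d + 1) = d * (a / d) + (d * (b / d) + (a % d + b % d + 1)) := by
      rw [hmsum]; ring
    rw [expand, ← hab]
    omega
  exact Nat.eq_of_mul_eq_mul_left (by omega) key

lemma Nq_hook {μ : YoungDiagram} {w r : ℕ} (hr1 : 1 ≤ r) (hrw : r ≤ w)
    (hL : μ.rowLens = r :: List.replicate (w - r) 1)
    {q : ℕ} (hq : 1 ≤ q) (hqw : q ∣ w) :
    Nq μ q = 1 + ((r - 1) / q + (w - r) / q) := by
  have hk : μ.colLen 0 = w - r + 1 := by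
    have := @YoungDiagram.length_rowLens μ
    rw [hL] at this
    simp at this
    omega
  have hrow0 : μ.rowLen 0 = r := by
    have h0 : 0 < μ.rowLens.length := by rw [hL]; simp
    have e1 : μ.rowLens[(0:ℕ)]? = some (μ.rowLen 0) := by
      rw [List.getElem?_eq_getElem h0, YoungDiagram.get_rowLens]
    have e2 : μ.rowLens[(0:ℕ)]? = some r := by rw [hL]; simp
    rw [e1] at e2
    exact Option.some.inj e2
  have hrowi : ∀ i : ℕ, 1 ≤ i → i < w - r + 1 → μ.rowLen i = 1 := by
    intro i hi1 hik
    obtain ⟨i', rfl⟩ : ∃ i', i = i' + 1 := ⟨i - 1, by omega⟩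
    have hlen : i' + 1 < μ.rowLens.length := by rw [hL]; simp; omega
    have e1 : μ.rowLens[(i' + 1 : ℕ)]? = some (μ.rowLen (i' + 1)) := by
      rw [List.getElem?_eq_getElem hlen, YoungDiagram.get_rowLens]
    have e2 : μ.rowLens[(i' + 1 : ℕ)]? = some 1 := by
      rw [hL]
      simp only [List.getElem?_cons_succ, List.getElem?_replicate]
      rw [if_pos (by omega)]
    rw [e1] at e2
    exact Option.some.inj e2
  have hcol : ∀ j : ℕ, 1 ≤ j → j < r → μ.colLen j = 1 := by
    intro j hj1 hjr
    have h1 : (0, j) ∈ μ := mem_iff_lt_rowLen.mpr (by omega)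
    have hr1' : μ.rowLen 1 ≤ 1 := by
      rcases Nat.eq_zero_or_pos (w - r) with h | h
      · rw [rowLen_zero (by omega)]; omega
      · rw [hrowi 1 le_rfl (by omega)]
    have h2 : (1, j) ∉ μ := fun hc => by
      have := mem_iff_lt_rowLen.mp hc; omega
    have hge := mem_iff_lt_colLen.mp h1
    have hlt : ¬ 1 < μ.colLen j := fun hc => h2 (mem_iff_lt_colLen.mpr hc)
    omega
  have hh00 : hookLength μ 0 0 = w := by
    unfold hookLength
    rw [hrow0, hk]
    omega
  have hh0j : ∀ j : ℕ, 1 ≤ j → j < r → hookLength μ 0 j = r - j := by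
    intro j h1 h2
    unfold hookLength
    rw [hrow0, hcol j h1 h2]
    omega
  have hhi0 : ∀ i : ℕ, 1 ≤ i → i < w - r + 1 → hookLength μ i 0 = (w - r + 1) - i := by
    intro i h1 h2
    unfold hookLength
    rw [hrowi i h1 h2, hk]
    omega
  rw [Nq_eq_sum_crow, hk, Finset.sum_range_succ']
  have hc0 : crow μ q 0 = 1 + (r - 1) / q := by
    unfold crow
    rw [hrow0]
    have hsplit : range r = insert 0 (Ico 1 r) := by
      ext x; simp only [mem_range, mem_insert, mem_Ico]; omega
    rw [hsplit, Finset.filter_insert, if_pos (by rw [hh00]; exact hqw)]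
    rw [Finset.card_insert_of_notMem (by simp)]
    have hcongr : (Ico 1 r).filter (fun j => q ∣ hookLength μ 0 j)
        = (Ico 1 r).filter (fun j => q ∣ r - j) := by
      apply Finset.filter_congr
      intro j hj
      simp only [mem_Ico] at hj
      rw [hh0j j hj.1 hj.2]
    rw [hcongr, count_Ico_dvd_sub r hq]
    omega
  have hci : ∀ i ∈ range (w - r), crow μ q (i + 1) = if q ∣ (w - r) - i then 1 else 0 := by
    intro i hi
    simp only [mem_range] at hi
    unfold crow
    rw [hrowi (i + 1) (by omega) (by omega)]
    have : range 1 = {0} := rfl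
    rw [this, Finset.filter_singleton]
    have harg : hookLength μ (i + 1) 0 = (w - r) - i := by
      rw [hhi0 (i + 1) (by omega) (by omega)]; omega
    rw [harg]
    split <;> simp
  rw [Finset.sum_congr rfl hci, hc0]
  have : ∑ i ∈ range (w - r), (if q ∣ (w - r) - i then 1 else 0)
      = ((range (w - r)).filter (fun i => q ∣ (w - r) - i)).card := by
    rw [Finset.card_filter]
  rw [this, count_range_dvd_sub _ hq]
  omega

lemma hook_of_odd {μ : YoungDiagram} {m : ℕ} (hm : 1 ≤ m) (hcard : μ.card = 2 ^ m)
    (hsum : ∑ j ∈ Ico 1 (m + 1), Nq μ (2 ^ j) = 2 ^ m - 1) :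
    ∃ r, 1 ≤ r ∧ r ≤ 2 ^ m ∧ μ.rowLens = r :: List.replicate (2 ^ m - r) 1 := by
  -- termwise bound
  have hterm : ∀ j ∈ Ico 1 (m + 1), Nq μ (2 ^ j) ≤ 2 ^ (m - j) := by
    intro j hj
    simp only [mem_Ico] at hj
    have := Nq_le_div μ (q := 2 ^ j) Nat.one_le_two_pow
    rwa [hcard, Nat.pow_div (by omega) (by omega)] at this
  have heach := (Finset.sum_eq_sum_iff_of_le hterm).mp (by rw [hsum, sum_Ico_two_pow])
  have hm' : m ∈ Ico 1 (m + 1) := by simp only [mem_Ico]; omega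
  have hNm : Nq μ (2 ^ m) = 1 := by
    have := heach m hm'
    simpa using this
  -- extract a cell with hook length 2^m
  have hex : ∃ c ∈ μ.cells, 2 ^ m ∣ hookLength μ c.1 c.2 := by
    have hpos : 0 < (μ.cells.filter (fun c => 2 ^ m ∣ hookLength μ c.1 c.2)).card := by
      rw [← Nq]; omega
    obtain ⟨c, hc⟩ := Finset.card_pos.mp hpos
    simp only [mem_filter] at hc
    exact ⟨c, hc.1, hc.2⟩
  obtain ⟨⟨i, j⟩, hc, hdvd⟩ := hex
  have hmem : (i, j) ∈ μ := (YoungDiagram.mem_cells _).mp hc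
  have h1 : 1 ≤ hookLength μ i j := hook_pos hmem
  have h2 : hookLength μ i j ≤ 2 ^ m := hcard ▸ hook_le_card hmem
  have hhook : hookLength μ i j = 2 ^ m :=
    le_antisymm h2 (Nat.le_of_dvd (by omega) hdvd)
  -- first row and column must be everything
  have hr1 : 1 ≤ μ.rowLen 0 := by
    have := μ.up_left_mem (Nat.zero_le i) (Nat.zero_le j) hmem
    exact (by simpa using mem_iff_lt_rowLen.mp this : 0 < _)
  have hc1 : 1 ≤ μ.colLen 0 := by
    have h00 : ((0 : ℕ), (0 : ℕ)) ∈ μ := μ.up_left_mem (Nat.zero_le i) (Nat.zero_le j) hmem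
    have := mem_iff_lt_colLen.mp h00
    omega
  have hfirst := hook_le_first hmem
  have hscard := hookSet_card hr1 hc1
  have hsub := Finset.card_le_card (hookSet_subset μ)
  have hcells : (μ.cells).card = μ.card := rfl
  -- rowLen 0 + colLen 0 = 2^m + 1 and hookSet = cells
  have hkey : (hookSet μ).card = μ.card := by omega
  have hEq : hookSet μ = μ.cells :=
    Finset.eq_of_subset_of_card_le (hookSet_subset μ) (by omega)
  have hRC : μ.rowLen 0 + μ.colLen 0 = 2 ^ m + 1 := by omega
  -- rows beyond the first have length 1
  have hrowi : ∀ i' : ℕ, 1 ≤ i' → i' < μ.colLen 0 → μ.rowLen i' = 1 := by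
    intro i' h1' h2'
    have hge : 1 ≤ μ.rowLen i' := rowLen_pos h2'
    have hnot : (i', 1) ∉ μ := by
      intro hmem'
      have : (i', 1) ∈ hookSet μ := hEq ▸ (YoungDiagram.mem_cells _).mpr hmem'
      simp only [hookSet, mem_union, mem_image, mem_range] at this
      rcases this with ⟨x, _, hx⟩ | ⟨x, _, hx⟩
      · exact absurd (Prod.ext_iff.mp hx).1 (by omega)
      · exact absurd (Prod.ext_iff.mp hx).2 (by omega)
    have hle : μ.rowLen i' ≤ 1 := by
      by_contra hcon
      push_neg at hcon
      exact hnot (mem_iff_lt_rowLen.mpr hcon)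
    omega
  refine ⟨μ.rowLen 0, hr1, by omega, ?_⟩
  apply List.ext_getElem
  · simp only [YoungDiagram.length_rowLens, List.length_cons, List.length_replicate]
    omega
  · intro n hn1 hn2
    rw [YoungDiagram.get_rowLens]
    match n with
    | 0 => simp
    | n + 1 =>
      rw [List.getElem_cons_succ, List.getElem_replicate]
      rw [YoungDiagram.length_rowLens] at hn1
      exact hrowi (n + 1) (by omega) hn1

end HookAux

/-- Let `w = 2^m` with `m ≥ 1`.  The degree `χ_λ(1)` of the irreducible character
of `S_w` labeled by a partition `λ` of `w` is odd if and only if `λ` is a hook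
partition `(r, 1^{w−r})` for some `1 ≤ r ≤ w`. -/
theorem stmt16 (m w : ℕ) (hm : 1 ≤ m) (hw : w = 2 ^ m)
    (μ : YoungDiagram) (hμ : μ.card = w) :
    Odd (charDegree μ) ↔
      ∃ r, 1 ≤ r ∧ r ≤ w ∧ μ.rowLens = r :: List.replicate (w - r) 1 := by
  subst hw
  rw [HookAux.odd_iff_sum_Nq hμ]
  constructor
  · exact HookAux.hook_of_odd hm hμ
  · rintro ⟨r, hr1, hrw, hL⟩
    have hval : ∀ j ∈ Finset.Ico 1 (m + 1), HookAux.Nq μ (2 ^ j) = 2 ^ (m - j) := by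
      intro j hj
      simp only [Finset.mem_Ico] at hj
      rw [HookAux.Nq_hook hr1 hrw hL Nat.one_le_two_pow (pow_dvd_pow 2 (by omega))]
      have hp : (2:ℕ) ^ j * 2 ^ (m - j) = 2 ^ m := by
        rw [← pow_add]; congr 1; omega
      have hD : 1 ≤ (2:ℕ) ^ (m - j) := Nat.one_le_two_pow
      have := HookAux.div_add_div_pow (a := r - 1) (b := 2 ^ m - r) (d := 2 ^ j)
        (D := 2 ^ (m - j)) Nat.one_le_two_pow hD (by omega)
      omega
    rw [Finset.sum_congr rfl hval, HookAux.sum_Ico_two_pow]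
end
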